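/- arXiv:2205.05000 — 3 statements merged into one kernel-verified Lean document; each statement's English description precedes it below -/
import Mathlib

section
/- For all M, N ∈ M_{n_a}, the matrix representation Ĝ of the Galerkin projection QGQ of the adoption generator G built from the first-order rate functions, with entries Ĝ_{NM} = ⟨Φ_M, G Φ_N⟩ / ⟨Φ_N, 𝟙⟩, is given by: Ĝ_{NM} = γ_{ij}^{(k)} N_i^{(k)} if M = N + E_j^{(k)} − E_i^{(k)} for some statuses i ≠ j and subset index k; Ĝ_{NN} = −∑_{i,j=1}^{n_s} ∑_{k=1}^{m} γ_{ij}^{(k)} N_i^{(k)}; and Ĝ_{NM} = 0 in all other cases. -/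
open MeasureTheory Finset Function

namespace ABMFormal

abbrev E (d : ℕ) : Type := EuclideanSpace ℝ (Fin d)
abbrev FS (d n_s n_a : ℕ) : Type := (Fin n_a → E d) → (Fin n_a → Fin n_s) → ℝ

noncomputable def occ {d m n_s n_a : ℕ} (A : Fin m → Set (E d)) (X : Fin n_a → E d)
    (S : Fin n_a → Fin n_s) (i : Fin n_s) (k : Fin m) : ℕ :=
  Set.ncard {α : Fin n_a | X α ∈ A k ∧ S α = i}

noncomputable def Phi {d m n_s n_a : ℕ} (A : Fin m → Set (E d)) (N : Fin n_s → Fin m → ℤ)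
    (X : Fin n_a → E d) (S : Fin n_a → Fin n_s) : ℝ :=
  if ∀ i k, ((occ A X S i k : ℕ) : ℤ) = N i k then 1 else 0

noncomputable def Mset (n_s m n_a : ℕ) : Finset (Fin n_s → Fin m → ℤ) :=
  ((Finset.univ : Finset (Fin n_s → Fin m → Fin (n_a + 1))).image
      fun f i k => ((f i k : ℕ) : ℤ)).filter
    fun N => (∑ i, ∑ k, N i k) = (n_a : ℤ)

def posSet {d : ℕ} (Xdom : Set (E d)) (n_a : ℕ) : Set (Fin n_a → E d) :=
  Set.univ.pi fun _ => Xdom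

noncomputable def ip {d n_s n_a : ℕ} (Xdom : Set (E d)) (f g : FS d n_s n_a) : ℝ :=
  (((volume Xdom).toReal * (n_s : ℝ)) ^ n_a)⁻¹ *
    ∑ S : Fin n_a → Fin n_s, ∫ X in posSet Xdom n_a, f X S * g X S

def one (d n_s n_a : ℕ) : FS d n_s n_a := fun _ _ => 1

def Emat {n_s m : ℕ} (i : Fin n_s) (k : Fin m) : Fin n_s → Fin m → ℤ :=
  fun i' k' => if i' = i ∧ k' = k then 1 else 0

def deltaS {n_s : ℕ} (i s : Fin n_s) : ℝ := if s = i then 1 else 0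

noncomputable def deltaA {d : ℕ} (A : Set (E d)) (x : E d) : ℝ :=
  A.indicator (fun _ => (1 : ℝ)) x

noncomputable def dr {d : ℕ} (r : ℝ) (x y : E d) : ℝ := if dist x y ≤ r then 1 else 0

/-- Transition rates `λ_i^{(kl)} = (∫_{A_l} ∫_{A_k} ℓ_i(x,y) dy dx) / μ(A_k)`. -/
noncomputable def lam {d m n_s : ℕ} (A : Fin m → Set (E d)) (K : Fin n_s → E d → E d → ℝ)
    (i : Fin n_s) (k l : Fin m) : ℝ :=
  (∫ x in A l, ∫ y in A k, K i x y) / (volume (A k)).toReal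

/-- The movement generator `(L p)(X, S) = ∑_α ∫_X ℓ_{s_α}(x_α, y) p(X^{α→y}, S) dy`. -/
noncomputable def Lop {d n_s n_a : ℕ} (Xdom : Set (E d)) (K : Fin n_s → E d → E d → ℝ)
    (p : FS d n_s n_a) : FS d n_s n_a :=
  fun X S => ∑ α, ∫ y in Xdom, K (S α) (X α) y * p (Function.update X α y) S

/-- `γ_{ij}^{(k)} = (∫_{A_k} γ_{ij}(x) dx) / μ(A_k)`. -/
noncomputable def gammaK {d m n_s : ℕ} (A : Fin m → Set (E d)) (γ : Fin n_s → Fin n_s → E d → ℝ)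
    (i j : Fin n_s) (k : Fin m) : ℝ :=
  (∫ x in A k, γ i j x) / (volume (A k)).toReal

/-- First-order adoption rate function `f_{ij}^{(α)}(X,S) = δ_i(s_α) γ_{ij}(x_α)`. -/
noncomputable def fFirst {d n_s n_a : ℕ} (γ : Fin n_s → Fin n_s → E d → ℝ) (i j : Fin n_s)
    (α : Fin n_a) (X : Fin n_a → E d) (S : Fin n_a → Fin n_s) : ℝ :=
  deltaS i (S α) * γ i j (X α)

/-- Outflow part `G₁ p = (∑_{i,j,α} f_{ij}^{(α)}) p` of the first-order adoption generator. -/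
noncomputable def G1First {d n_s n_a : ℕ} (γ : Fin n_s → Fin n_s → E d → ℝ)
    (p : FS d n_s n_a) : FS d n_s n_a :=
  fun X S => (∑ i, ∑ j, ∑ α, fFirst γ i j α X S) * p X S

/-- Inflow part `G₂ p (X,S) = ∑_{i,j,α} f_{ij}^{(α)}(X, S + i e_α − j e_α) p(X, S + i e_α − j e_α)`
of the first-order adoption generator.  Since in coordinatewise integer arithmetic
`δ_i(s_α + i − j) = δ_j(s_α)`, and then `S + i e_α − j e_α = Function.update S α i` lies in
`S^{n_a}`, while all other summands vanish by the extension-by-zero convention, the term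
equals `∑_{i,j,α} δ_j(s_α) γ_{ij}(x_α) p(X, update S α i)`. -/
noncomputable def G2First {d n_s n_a : ℕ} (γ : Fin n_s → Fin n_s → E d → ℝ)
    (p : FS d n_s n_a) : FS d n_s n_a :=
  fun X S => ∑ i, ∑ j, ∑ α, deltaS j (S α) * γ i j (X α) * p X (Function.update S α i)

/-- The first-order adoption generator `G = −G₁ + G₂`. -/
noncomputable def GopFirst {d n_s n_a : ℕ} (γ : Fin n_s → Fin n_s → E d → ℝ)
    (p : FS d n_s n_a) : FS d n_s n_a :=
  fun X S => -(G1First γ p X S) + G2First γ p X S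

/-- Second-order adoption rate function
`f_{ij}^{(α)}(X,S) = δ_i(s_α) ∑_{β ≠ α} δ_j(s_β) c_{ij} d_r(x_α, x_β)`. -/
noncomputable def fSecond {d n_s n_a : ℕ} (c : Fin n_s → Fin n_s → ℝ) (r : ℝ)
    (i j : Fin n_s) (α : Fin n_a) (X : Fin n_a → E d) (S : Fin n_a → Fin n_s) : ℝ :=
  deltaS i (S α) * ∑ β ∈ Finset.univ.erase α, deltaS j (S β) * (c i j * dr r (X α) (X β))

/-- Outflow part `G₁ p = (∑_{i,j,α} f_{ij}^{(α)}) p` of the second-order adoption generator. -/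
noncomputable def G1Second {d n_s n_a : ℕ} (c : Fin n_s → Fin n_s → ℝ) (r : ℝ)
    (p : FS d n_s n_a) : FS d n_s n_a :=
  fun X S => (∑ i, ∑ j, ∑ α, fSecond c r i j α X S) * p X S

/-- Inflow part of the second-order adoption generator, the term
`∑_{i,j,α} f_{ij}^{(α)}(X, S + i e_α − j e_α) p(X, S + i e_α − j e_α)`; as in the
first-order case the only non-vanishing summands are those with `s_α = j`, giving
`∑_{i,j,α} δ_j(s_α) (∑_{β ≠ α} δ_j(s_β) c_{ij} d_r(x_α,x_β)) p(X, update S α i)`. -/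
noncomputable def G2Second {d n_s n_a : ℕ} (c : Fin n_s → Fin n_s → ℝ) (r : ℝ)
    (p : FS d n_s n_a) : FS d n_s n_a :=
  fun X S => ∑ i, ∑ j, ∑ α, deltaS j (S α) *
    (∑ β ∈ Finset.univ.erase α, deltaS j (S β) * (c i j * dr r (X α) (X β))) *
    p X (Function.update S α i)

/-- The second-order adoption generator `G = −G₁ + G₂`. -/
noncomputable def GopSecond {d n_s n_a : ℕ} (c : Fin n_s → Fin n_s → ℝ) (r : ℝ)
    (p : FS d n_s n_a) : FS d n_s n_a :=
  fun X S => -(G1Second c r p X S) + G2Second c r p X S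

/-- `b_{kl} = (∫_{A_k} ∫_{A_l} d_r(x₁,x₂) dx₂ dx₁)/(μ(A_k) μ(A_l))`. -/
noncomputable def bOf {d m : ℕ} (A : Fin m → Set (E d)) (r : ℝ) (k l : Fin m) : ℝ :=
  (∫ x in A k, ∫ y in A l, dr r x y) / ((volume (A k)).toReal * (volume (A l)).toReal)

/-- The normalized ansatz functions `Φ̂_N = Φ_N / ⟨Φ_N, 𝟙⟩`. -/
noncomputable def Phihat {d m n_s n_a : ℕ} (Xdom : Set (E d)) (A : Fin m → Set (E d))
    (N : Fin n_s → Fin m → ℤ) : FS d n_s n_a :=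
  fun X S => Phi A N X S / ip Xdom (Phi (n_a := n_a) A N) (one d n_s n_a)

/-- The Galerkin projection `Q v = ∑_{N ∈ M_{n_a}} (⟨Φ_N, v⟩/⟨Φ_N, 𝟙⟩) Φ_N`. -/
noncomputable def Qproj {d m n_s n_a : ℕ} (Xdom : Set (E d)) (A : Fin m → Set (E d))
    (v : FS d n_s n_a) : FS d n_s n_a :=
  fun X S => ∑ N ∈ Mset n_s m n_a,
    (ip Xdom (Phi (n_a := n_a) A N) v / ip Xdom (Phi (n_a := n_a) A N) (one d n_s n_a)) *
      Phi A N X S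

/-- The matrix representation `Ĥ_{NM} = ⟨Φ_M, H Φ_N⟩ / ⟨Φ_N, 𝟙⟩` of a projected operator. -/
noncomputable def Hhat {d m n_s n_a : ℕ} (Xdom : Set (E d)) (A : Fin m → Set (E d))
    (H : FS d n_s n_a →ₗ[ℝ] FS d n_s n_a) (N M : Fin n_s → Fin m → ℤ) : ℝ :=
  ip Xdom (Phi (n_a := n_a) A M) (H (Phi A N)) / ip Xdom (Phi (n_a := n_a) A N) (one d n_s n_a)

section AuxA

variable {d m n_s n_a : ℕ}

noncomputable def chiA (A : Fin m → Set (E d)) (t : Fin n_s × Fin m) (x : E d) (s : Fin n_s) : ℝ :=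
  deltaA (A t.2) x * deltaS t.1 s

def cntf (T : Fin n_a → Fin n_s × Fin m) : Fin n_s → Fin m → ℤ :=
  fun i k => (((univ : Finset (Fin n_a)).filter fun α => T α = (i, k)).card : ℤ)

def Types (n_s m n_a : ℕ) (N : Fin n_s → Fin m → ℤ) : Finset (Fin n_a → Fin n_s × Fin m) :=
  univ.filter fun T => cntf T = N

lemma mem_Types {N : Fin n_s → Fin m → ℤ} {T : Fin n_a → Fin n_s × Fin m} :
    T ∈ Types n_s m n_a N ↔ cntf T = N := by simp [Types]

lemma card_filter_update {τ : Type*} [DecidableEq τ] (g : Fin n_a → τ) (α : Fin n_a)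
    (b : τ) (t : τ) :
    ((((univ : Finset (Fin n_a))).filter fun β => update g α b β = t).card : ℤ)
      = ((univ.filter fun β => g β = t).card : ℤ)
        + (if b = t then 1 else 0) - (if g α = t then 1 else 0) := by
  have key : ∀ h : Fin n_a → τ,
      ((univ.filter fun β => h β = t).card : ℤ)
        = (((univ.erase α).filter fun β => h β = t).card : ℤ)
          + (if h α = t then 1 else 0) := by
    intro h
    have h1 : (univ : Finset (Fin n_a)) = insert α (univ.erase α) :=
      (insert_erase (mem_univ α)).symm
    nth_rewrite 1 [h1]
    rw [filter_insert]
    by_cases hα : h α = t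
    · rw [if_pos hα, card_insert_of_notMem (by simp), if_pos hα]
      push_cast; ring
    · rw [if_neg hα, if_neg hα]; ring
  have he : ((univ.erase α).filter fun β => update g α b β = t)
      = ((univ.erase α).filter fun β => g β = t) := by
    apply filter_congr; intro β hβ
    rw [update_of_ne (mem_erase.mp hβ).1]
  rw [key, key g, he]
  have : (if update g α b α = t then (1:ℤ) else 0) = (if b = t then 1 else 0) := by
    rw [update_self]
  rw [this]; ring

lemma cntf_update (T : Fin n_a → Fin n_s × Fin m) (α : Fin n_a) (b : Fin n_s × Fin m)
    (i : Fin n_s) (k : Fin m) :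
    cntf (update T α b) i k
      = cntf T i k + (if b = (i,k) then 1 else 0) - (if T α = (i,k) then 1 else 0) :=
  card_filter_update T α b (i,k)

lemma occ_eq_cntf {A : Fin m → Set (E d)} {X : Fin n_a → E d} (S : Fin n_a → Fin n_s)
    (kx : Fin n_a → Fin m) (hkx : ∀ α, X α ∈ A (kx α))
    (huniq : ∀ α k, X α ∈ A k → k = kx α) (i : Fin n_s) (k : Fin m) :
    ((occ A X S i k : ℕ) : ℤ) = cntf (fun α => (S α, kx α)) i k := by
  unfold occ cntf
  norm_cast
  rw [← Set.ncard_coe_finset]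
  congr 1
  ext α
  simp only [coe_filter, mem_univ, true_and, Set.mem_setOf_eq, Prod.mk.injEq]
  constructor
  · rintro ⟨hx, hs⟩; exact ⟨hs, (huniq α k hx).symm⟩
  · rintro ⟨hs, hk⟩; exact ⟨hk ▸ hkx α, hs⟩

/-- helper: equality of signed indicator differences forces equality of pairs -/
lemma delta_pair_eq {τ : Type*} [DecidableEq τ] {a b a' b' : τ} (hab : a ≠ b) (hab' : a' ≠ b')
    (h : ∀ t : τ, (if a = t then (1:ℤ) else 0) - (if b = t then 1 else 0)
        = (if a' = t then 1 else 0) - (if b' = t then 1 else 0)) :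
    a = a' ∧ b = b' := by
  constructor
  · have := h a
    by_cases h1 : a' = a
    · exact h1.symm
    · exfalso
      have hba : b ≠ a := fun hba => hab hba.symm
      by_cases h2 : b' = a <;> simp [h1, h2, hba] at this
  · have := h b'
    by_cases h1 : b = b'
    · exact h1
    · exfalso
      by_cases h2 : a = b' <;> simp [h1, h2, hab'] at this

lemma sum_comp_cntf (T : Fin n_a → Fin n_s × Fin m) (h : Fin n_s × Fin m → ℝ) :
    ∑ α, h (T α) = ∑ t : Fin n_s × Fin m, ((cntf T t.1 t.2 : ℤ) : ℝ) * h t := by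
  rw [← Finset.sum_fiberwise univ T (fun α => h (T α))]
  refine Finset.sum_congr rfl fun t _ => ?_
  have : ∀ α ∈ univ.filter fun α => T α = t, h (T α) = h t := by
    intro α hα; rw [(mem_filter.mp hα).2]
  rw [Finset.sum_congr rfl this, Finset.sum_const, nsmul_eq_mul, cntf]
  push_cast
  norm_num

end AuxA

section AuxB

variable {d m n_s n_a : ℕ}

lemma Phi_sq (A : Fin m → Set (E d)) (N : Fin n_s → Fin m → ℤ) (X : Fin n_a → E d)
    (S : Fin n_a → Fin n_s) : Phi A N X S * Phi A N X S = Phi A N X S := by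
  unfold Phi; split <;> simp

lemma Phi_mul_Phi_zero {M N : Fin n_s → Fin m → ℤ} (hMN : M ≠ N) (A : Fin m → Set (E d))
    (X : Fin n_a → E d) (S : Fin n_a → Fin n_s) :
    Phi A M X S * Phi A N X S = 0 := by
  unfold Phi
  split
  · next h1 =>
    split
    · next h2 => exact absurd (funext fun i => funext fun k => by rw [← h1 i k, ← h2 i k]) hMN
    · simp
  · simp

lemma Phi_eq_ite (A : Fin m → Set (E d)) (N : Fin n_s → Fin m → ℤ) {X : Fin n_a → E d}
    (S : Fin n_a → Fin n_s) (kx : Fin n_a → Fin m) (hkx : ∀ α, X α ∈ A (kx α))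
    (huniq : ∀ α k, X α ∈ A k → k = kx α) :
    Phi A N X S = if cntf (fun α => (S α, kx α)) = N then 1 else 0 := by
  by_cases h : cntf (fun α => (S α, kx α)) = N
  · rw [if_pos h]; unfold Phi; rw [if_pos]
    intro i k; rw [occ_eq_cntf S kx hkx huniq i k, h]
  · rw [if_neg h]; unfold Phi; rw [if_neg]
    intro hc; apply h; funext i k
    rw [← occ_eq_cntf S kx hkx huniq i k]; exact hc i k

lemma prod_chiA_eq_ite (A : Fin m → Set (E d)) {X : Fin n_a → E d} (S : Fin n_a → Fin n_s)
    (kx : Fin n_a → Fin m) (hkx : ∀ α, X α ∈ A (kx α))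
    (huniq : ∀ α k, X α ∈ A k → k = kx α) (T : Fin n_a → Fin n_s × Fin m) :
    (∏ α, chiA A (T α) (X α) (S α)) = if T = (fun α => (S α, kx α)) then 1 else 0 := by
  by_cases h : T = fun α => (S α, kx α)
  · rw [if_pos h, h]
    apply Finset.prod_eq_one
    intro α _
    simp [chiA, deltaA, deltaS, Set.indicator_of_mem (hkx α)]
  · rw [if_neg h]
    have hex : ∃ α, T α ≠ (S α, kx α) := by
      by_contra h'; push_neg at h'; exact h (funext h')
    obtain ⟨α, hα⟩ := hex
    apply Finset.prod_eq_zero (mem_univ α)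
    by_cases hs : S α = (T α).1
    · have h2 : (T α).2 ≠ kx α := by
        intro h2; apply hα; rw [Prod.ext_iff]; exact ⟨hs.symm, h2⟩
      have hx : X α ∉ A (T α).2 := fun hmem => h2 (huniq α _ hmem)
      simp [chiA, deltaA, Set.indicator_of_notMem hx]
    · simp [chiA, deltaS, hs]

lemma Phi_decomp (A : Fin m → Set (E d)) (N : Fin n_s → Fin m → ℤ) {X : Fin n_a → E d}
    (S : Fin n_a → Fin n_s) (kx : Fin n_a → Fin m) (hkx : ∀ α, X α ∈ A (kx α))
    (huniq : ∀ α k, X α ∈ A k → k = kx α) :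
    Phi A N X S = ∑ T ∈ Types n_s m n_a N, ∏ α, chiA A (T α) (X α) (S α) := by
  rw [Finset.sum_congr rfl (fun T _ => prod_chiA_eq_ite A S kx hkx huniq T),
      Finset.sum_ite_eq' (Types n_s m n_a N) (fun α => (S α, kx α)) (fun _ => (1:ℝ)),
      Phi_eq_ite A N S kx hkx huniq]
  simp [mem_Types]

lemma exists_kx {Xdom : Set (E d)} {A : Fin m → Set (E d)}
    (hAdisj : Pairwise (Disjoint on A)) (hAcover : (⋃ k, A k) = Xdom)
    {X : Fin n_a → E d} (hX : X ∈ posSet Xdom n_a) :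
    ∃ kx : Fin n_a → Fin m, (∀ α, X α ∈ A (kx α)) ∧ (∀ α k, X α ∈ A k → k = kx α) := by
  have h : ∀ α, ∃ k, X α ∈ A k := by
    intro α
    have hm : X α ∈ Xdom := hX α (Set.mem_univ α)
    rw [← hAcover] at hm
    exact Set.mem_iUnion.mp hm
  choose kx hkx using h
  refine ⟨kx, hkx, fun α k hk => ?_⟩
  by_contra hne
  exact (Set.disjoint_left.mp (hAdisj hne) hk) (hkx α)

end AuxB


section AuxC

variable {d m n_s n_a : ℕ} {Xdom : Set (E d)} {A : Fin m → Set (E d)}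

lemma posSet_measurable (hXm : MeasurableSet Xdom) : MeasurableSet (posSet Xdom n_a) :=
  MeasurableSet.univ_pi fun _ => hXm

lemma chiA_eq_indicator (t : Fin n_s × Fin m) (s : Fin n_s) :
    (fun x => chiA A t x s) = Set.indicator (A t.2) (fun _ => deltaS t.1 s) := by
  funext x
  by_cases h : x ∈ A t.2 <;>
    simp [chiA, deltaA, h, Set.indicator_of_mem, Set.indicator_of_notMem]

lemma chiA_integrableOn (hXfin : volume Xdom ≠ ⊤) (hAmeas : ∀ k, MeasurableSet (A k))
    (t : Fin n_s × Fin m) (s : Fin n_s) :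
    IntegrableOn (fun x => chiA A t x s) Xdom := by
  rw [chiA_eq_indicator]
  apply Integrable.indicator _ (hAmeas t.2)
  exact integrableOn_const hXfin

lemma sum_integral_chiA (hAmeas : ∀ k, MeasurableSet (A k)) (hAsub : ∀ k, A k ⊆ Xdom)
    (t : Fin n_s × Fin m) :
    ∑ s, ∫ x in Xdom, chiA A t x s = (volume (A t.2)).toReal := by
  have h1 : ∀ s, ∫ x in Xdom, chiA A t x s = (volume (A t.2)).toReal * deltaS t.1 s := by
    intro s
    rw [chiA_eq_indicator, setIntegral_indicator (hAmeas t.2),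
        Set.inter_eq_self_of_subset_right (hAsub t.2), setIntegral_const, smul_eq_mul]
    rfl
  simp_rw [h1]
  rw [← Finset.mul_sum]
  simp [deltaS, Finset.sum_ite_eq']

lemma master (hXm : MeasurableSet Xdom) (hXfin : volume Xdom ≠ ⊤)
    (hAmeas : ∀ k, MeasurableSet (A k)) (hAsub : ∀ k, A k ⊆ Xdom)
    (T : Fin n_a → Fin n_s × Fin m) (α : Fin n_a) (D : E d → Fin n_s → ℝ) (V : ℝ)
    (hInt : ∀ s, IntegrableOn (fun x => chiA A (T α) x s * D x s) Xdom)
    (hV : ∑ s, ∫ x in Xdom, chiA A (T α) x s * D x s = V) :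
    (∀ S : Fin n_a → Fin n_s,
      IntegrableOn (fun X => (∏ β, chiA A (T β) (X β) (S β)) * D (X α) (S α))
        (posSet Xdom n_a)) ∧
    ∑ S : Fin n_a → Fin n_s,
        ∫ X in posSet Xdom n_a, (∏ β, chiA A (T β) (X β) (S β)) * D (X α) (S α)
      = V * ∏ β ∈ univ.erase α, (volume (A (T β).2)).toReal := by
  classical
  set g : Fin n_a → E d → Fin n_s → ℝ :=
    fun β x s => chiA A (T β) x s * (if β = α then D x s else 1) with hg
  have hprod : ∀ (X : Fin n_a → E d) (S : Fin n_a → Fin n_s),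
      (∏ β, chiA A (T β) (X β) (S β)) * D (X α) (S α) = ∏ β, g β (X β) (S β) := by
    intro X S
    have h2 : ∏ β, g β (X β) (S β)
        = (∏ β, chiA A (T β) (X β) (S β)) * ∏ β, (if β = α then D (X β) (S β) else 1) :=
      Finset.prod_mul_distrib
    rw [h2, Finset.prod_ite_eq' univ α (fun β => D (X β) (S β)), if_pos (mem_univ α)]
  have hgint : ∀ β (s : Fin n_s), IntegrableOn (fun x => g β x s) Xdom := by
    intro β s
    by_cases hβ : β = α
    · subst hβ; simpa [hg] using hInt s
    · simpa [hg, hβ] using chiA_integrableOn hXfin hAmeas (T β) s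
  have hmeasp : MeasurableSet (posSet Xdom n_a) := posSet_measurable hXm
  have hind : ∀ S : Fin n_a → Fin n_s,
      (posSet Xdom n_a).indicator (fun X => ∏ β, g β (X β) (S β))
        = fun X => ∏ β, (Set.indicator Xdom fun x => g β x (S β)) (X β) := by
    intro S; funext X
    by_cases hX : X ∈ posSet Xdom n_a
    · rw [Set.indicator_of_mem hX]
      refine Finset.prod_congr rfl fun β _ => ?_
      have hXβ : X β ∈ Xdom := hX β (Set.mem_univ β)
      rw [Set.indicator_of_mem hXβ]
    · rw [Set.indicator_of_notMem hX]
      have hex : ∃ β, X β ∉ Xdom := by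
        by_contra h'; push_neg at h'
        exact hX fun β _ => h' β
      obtain ⟨β, hβ⟩ := hex
      exact (Finset.prod_eq_zero (mem_univ β)
        (by rw [Set.indicator_of_notMem hβ])).symm
  have hIndInt : ∀ (β : Fin n_a) (s : Fin n_s),
      Integrable (Set.indicator Xdom fun x => g β x s) volume :=
    fun β s => (integrable_indicator_iff hXm).2 (hgint β s)
  have hIOn : ∀ S : Fin n_a → Fin n_s,
      IntegrableOn (fun X => ∏ β, g β (X β) (S β)) (posSet Xdom n_a) := by
    intro S
    refine (integrable_indicator_iff hmeasp).1 ?_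
    rw [hind S]
    exact Integrable.fintype_prod (f := fun β => Set.indicator Xdom fun x => g β x (S β))
      (fun β => hIndInt β (S β))
  refine ⟨?_, ?_⟩
  · intro S
    have heq : (fun X : Fin n_a → E d => (∏ β, chiA A (T β) (X β) (S β)) * D (X α) (S α))
        = fun X => ∏ β, g β (X β) (S β) := funext fun X => hprod X S
    rw [heq]; exact hIOn S
  · have hinteq : ∀ S : Fin n_a → Fin n_s,
        ∫ X in posSet Xdom n_a, ∏ β, g β (X β) (S β)
          = ∏ β, ∫ x in Xdom, g β x (S β) := by
      intro S
      rw [← integral_indicator hmeasp, hind S]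
      simp only [volume_pi]
      rw [MeasureTheory.integral_fintype_prod_eq_prod
          (fun β => Set.indicator Xdom fun x => g β x (S β))]
      exact Finset.prod_congr rfl fun β _ => integral_indicator hXm
    have e1 : ∑ S : Fin n_a → Fin n_s, (∫ X in posSet Xdom n_a,
          (∏ β, chiA A (T β) (X β) (S β)) * D (X α) (S α))
        = ∑ S : Fin n_a → Fin n_s, ∏ β, ∫ x in Xdom, g β x (S β) := by
      refine Finset.sum_congr rfl fun S _ => ?_
      simp_rw [hprod]
      exact hinteq S
    have e2 : (∑ S : Fin n_a → Fin n_s, ∏ β, ∫ x in Xdom, g β x (S β))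
        = ∏ β, ∑ s, ∫ x in Xdom, g β x s := by
      rw [Finset.prod_univ_sum (fun _ => (univ : Finset (Fin n_s)))
        (fun β s => ∫ x in Xdom, g β x s), Fintype.piFinset_univ]
    have e3 : (∏ β : Fin n_a, ∑ s, ∫ x in Xdom, g β x s)
        = V * ∏ β ∈ univ.erase α, (volume (A (T β).2)).toReal := by
      rw [← Finset.mul_prod_erase univ _ (mem_univ α)]
      congr 1
      · rw [← hV]
        refine Finset.sum_congr rfl fun s _ => ?_
        congr 1; funext x; simp [hg]
      · refine Finset.prod_congr rfl fun β hβ => ?_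
        have hβα : β ≠ α := (mem_erase.mp hβ).1
        have h3 : (∑ s, ∫ x in Xdom, g β x s) = ∑ s, ∫ x in Xdom, chiA A (T β) x s := by
          refine Finset.sum_congr rfl fun s _ => ?_
          congr 1; funext x; simp [hg, hβα]
        rw [h3]
        exact sum_integral_chiA hAmeas hAsub (T β)
    rw [e1, e2, e3]

end AuxC


section AuxD

variable {d m n_s n_a : ℕ} {Xdom : Set (E d)} {A : Fin m → Set (E d)}

lemma sum_deltaS_mul (a b : Fin n_s) :
    ∑ s, deltaS a s * deltaS b s = if a = b then (1:ℝ) else 0 := by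
  unfold deltaS
  rcases eq_or_ne a b with h | h
  · subst h
    rw [if_pos rfl]
    have : ∀ s : Fin n_s, ((if s = a then (1:ℝ) else 0) * (if s = a then 1 else 0))
        = if s = a then (1:ℝ) else 0 := by
      intro s; by_cases h1 : s = a <;> simp [h1]
    rw [Finset.sum_congr rfl fun s _ => this s, Finset.sum_ite_eq' univ a (fun _ => (1:ℝ))]
    simp
  · rw [if_neg h]
    apply Finset.sum_eq_zero; intro s _
    by_cases h1 : s = a <;> by_cases h2 : s = b <;> simp_all

lemma chiA_mul_split (t : Fin n_s × Fin m) (s : Fin n_s) (a : Fin n_s) (f : E d → ℝ) :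
    (fun x => chiA A t x s * (deltaS a s * f x))
      = fun x => (deltaS t.1 s * deltaS a s) * Set.indicator (A t.2) f x := by
  funext x
  by_cases h : x ∈ A t.2 <;>
    simp [chiA, deltaA, h, Set.indicator_of_mem, Set.indicator_of_notMem] <;> ring

lemma e2_int (hAmeas : ∀ k, MeasurableSet (A k)) {γ : Fin n_s → Fin n_s → E d → ℝ}
    (hγint : ∀ i j, IntegrableOn (γ i j) Xdom) (t : Fin n_s × Fin m) (i j : Fin n_s)
    (s : Fin n_s) :
    IntegrableOn (fun x => chiA A t x s * (deltaS i s * γ i j x)) Xdom := by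
  rw [chiA_mul_split]
  exact (((hγint i j).indicator (hAmeas t.2))).const_mul _

lemma e2_val (hAmeas : ∀ k, MeasurableSet (A k)) (hAsub : ∀ k, A k ⊆ Xdom)
    {γ : Fin n_s → Fin n_s → E d → ℝ} (t : Fin n_s × Fin m) (i j : Fin n_s) :
    ∑ s, ∫ x in Xdom, chiA A t x s * (deltaS i s * γ i j x)
      = if t.1 = i then ∫ x in A t.2, γ i j x else 0 := by
  have h1 : ∀ s : Fin n_s, ∫ x in Xdom, chiA A t x s * (deltaS i s * γ i j x)
      = (deltaS t.1 s * deltaS i s) * ∫ x in A t.2, γ i j x := by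
    intro s
    rw [chiA_mul_split, integral_const_mul _ _, setIntegral_indicator (hAmeas t.2),
      Set.inter_eq_self_of_subset_right (hAsub t.2)]
  rw [Finset.sum_congr rfl fun s _ => h1 s, ← Finset.sum_mul, sum_deltaS_mul]
  by_cases h : t.1 = i <;> simp [h]

lemma chiA_mul_split2 (t : Fin n_s × Fin m) (s : Fin n_s) (a : Fin n_s) (k0 : Fin m)
    (f : E d → ℝ) :
    (fun x => chiA A t x s * (deltaS a s * (deltaA (A k0) x * f x)))
      = fun x => (deltaS t.1 s * deltaS a s) * Set.indicator (A t.2 ∩ A k0) f x := by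
  funext x
  rw [← Set.indicator_indicator]
  by_cases h : x ∈ A t.2 <;> by_cases h2 : x ∈ A k0 <;>
    simp [chiA, deltaA, h, h2, Set.indicator_of_mem, Set.indicator_of_notMem] <;> ring

lemma e3_int (hAmeas : ∀ k, MeasurableSet (A k)) {γ : Fin n_s → Fin n_s → E d → ℝ}
    (hγint : ∀ i j, IntegrableOn (γ i j) Xdom) (t : Fin n_s × Fin m) (i0 j0 : Fin n_s)
    (k0 : Fin m) (s : Fin n_s) :
    IntegrableOn (fun x => chiA A t x s * (deltaS j0 s * (deltaA (A k0) x * γ i0 j0 x)))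
      Xdom := by
  rw [chiA_mul_split2]
  exact (((hγint i0 j0).indicator ((hAmeas t.2).inter (hAmeas k0)))).const_mul _

lemma e3_val (hAmeas : ∀ k, MeasurableSet (A k)) (hAsub : ∀ k, A k ⊆ Xdom)
    (hAdisj : Pairwise (Disjoint on A)) {γ : Fin n_s → Fin n_s → E d → ℝ}
    (t : Fin n_s × Fin m) (i0 j0 : Fin n_s) (k0 : Fin m) :
    ∑ s, ∫ x in Xdom, chiA A t x s * (deltaS j0 s * (deltaA (A k0) x * γ i0 j0 x))
      = if t = (j0, k0) then ∫ x in A k0, γ i0 j0 x else 0 := by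
  have h1 : ∀ s : Fin n_s,
      ∫ x in Xdom, chiA A t x s * (deltaS j0 s * (deltaA (A k0) x * γ i0 j0 x))
      = (deltaS t.1 s * deltaS j0 s) * ∫ x in Xdom ∩ (A t.2 ∩ A k0), γ i0 j0 x := by
    intro s
    rw [chiA_mul_split2, integral_const_mul _ _,
      setIntegral_indicator ((hAmeas t.2).inter (hAmeas k0))]
  rw [Finset.sum_congr rfl fun s _ => h1 s, ← Finset.sum_mul, sum_deltaS_mul]
  by_cases hk : t.2 = k0
  · by_cases hj : t.1 = j0
    · rw [if_pos hj, if_pos (by rw [Prod.ext_iff]; exact ⟨hj, hk⟩)]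
      rw [hk, Set.inter_self, Set.inter_eq_self_of_subset_right (hAsub k0), one_mul]
    · rw [if_neg hj, if_neg (fun h => hj (Prod.ext_iff.mp h).1)]
      ring
  · have hdisj : A t.2 ∩ A k0 = ∅ := Set.disjoint_iff_inter_eq_empty.mp (hAdisj hk)
    rw [if_neg (fun h => hk (Prod.ext_iff.mp h).2), hdisj]
    simp

lemma Types_nonempty {N : Fin n_s → Fin m → ℤ} (hN : N ∈ Mset n_s m n_a) :
    (Types n_s m n_a N).Nonempty := by
  classical
  rw [Mset, mem_filter, mem_image] at hN
  obtain ⟨⟨f, -, hf⟩, hsum⟩ := hN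
  set c : Fin n_s × Fin m → ℕ := fun t => (f t.1 t.2 : ℕ) with hc
  have hNc : ∀ i k, N i k = (c (i, k) : ℤ) := by
    intro i k; rw [← hf]
  have hcard : Fintype.card ((t : Fin n_s × Fin m) × Fin (c t)) = Fintype.card (Fin n_a) := by
    rw [Fintype.card_sigma, Fintype.card_fin]
    have : ∀ t : Fin n_s × Fin m, Fintype.card (Fin (c t)) = c t := fun t => Fintype.card_fin _
    rw [Finset.sum_congr rfl fun t _ => this t]
    have h2 : ((∑ t : Fin n_s × Fin m, c t : ℕ) : ℤ) = (n_a : ℤ) := by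
      rw [← hsum]
      push_cast
      rw [Fintype.sum_prod_type]
      exact Finset.sum_congr rfl fun i _ => Finset.sum_congr rfl fun k _ => (hNc i k).symm
    exact_mod_cast h2
  obtain e := Fintype.equivOfCardEq hcard
  refine ⟨fun a => (e.symm a).1, ?_⟩
  rw [mem_Types]
  funext i k
  rw [hNc i k, cntf]
  congr 1
  have h3 : (univ.filter fun a : Fin n_a => (e.symm a).1 = (i,k)).card
      = Fintype.card {a : Fin n_a // (e.symm a).1 = (i,k)} := (Fintype.card_subtype _).symm
  rw [h3]
  have e2 : {a : Fin n_a // (e.symm a).1 = (i,k)}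
      ≃ {p : (t : Fin n_s × Fin m) × Fin (c t) // p.1 = (i,k)} :=
    Equiv.subtypeEquiv e.symm (fun a => Iff.rfl)
  have e3 : Fin (c (i,k)) ≃ {p : (t : Fin n_s × Fin m) × Fin (c t) // p.1 = (i,k)} :=
    { toFun := fun x => ⟨⟨(i,k), x⟩, rfl⟩
      invFun := fun p => Fin.cast (congrArg c p.2) p.1.2
      left_inv := fun x => rfl
      right_inv := by
        rintro ⟨⟨t, x⟩, h⟩
        dsimp only at h
        subst h
        rfl }
  rw [Fintype.card_congr (e2.trans e3.symm), Fintype.card_fin]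

end AuxD


section AuxE

variable {d m n_s n_a : ℕ} {Xdom : Set (E d)} {A : Fin m → Set (E d)}
  {γ : Fin n_s → Fin n_s → E d → ℝ} {N M : Fin n_s → Fin m → ℤ}

lemma integral_gammaK (hApos : ∀ k, 0 < volume (A k)) (hAfin : ∀ k, volume (A k) ≠ ⊤)
    (i j : Fin n_s) (k : Fin m) :
    ∫ x in A k, γ i j x = gammaK A γ i j k * (volume (A k)).toReal := by
  rw [gammaK, div_mul_cancel₀]
  exact (ENNReal.toReal_pos (hApos k).ne' (hAfin k)).ne'

lemma ip_phi_one_eq (hXm : MeasurableSet Xdom) (hXfin : volume Xdom ≠ ⊤)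
    (hAmeas : ∀ k, MeasurableSet (A k)) (hAsub : ∀ k, A k ⊆ Xdom)
    (hAdisj : Pairwise (Disjoint on A)) (hAcover : (⋃ k, A k) = Xdom)
    (hna : 1 ≤ n_a) (N : Fin n_s → Fin m → ℤ) :
    ip Xdom (Phi (n_a := n_a) A N) (one d n_s n_a)
      = (((volume Xdom).toReal * n_s) ^ n_a)⁻¹ *
          ∑ T ∈ Types n_s m n_a N, ∏ β, (volume (A (T β).2)).toReal := by
  have hmeasp : MeasurableSet (posSet Xdom n_a) := posSet_measurable hXm
  have h0 : 0 < n_a := hna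
  set α0 : Fin n_a := ⟨0, h0⟩ with hα0
  have hTm := fun T : Fin n_a → Fin n_s × Fin m =>
    master (n_s := n_s) hXm hXfin hAmeas hAsub T α0 (fun _ _ => (1:ℝ))
      ((volume (A (T α0).2)).toReal)
      (fun s => by simpa using chiA_integrableOn hXfin hAmeas (T α0) s)
      (by simpa using sum_integral_chiA hAmeas hAsub (T α0))
  unfold ip
  congr 1
  have step1 : ∀ S : Fin n_a → Fin n_s,
      ∫ X in posSet Xdom n_a, Phi A N X S * one d n_s n_a X S
        = ∑ T ∈ Types n_s m n_a N, ∫ X in posSet Xdom n_a,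
            (∏ β, chiA A (T β) (X β) (S β)) * (1:ℝ) := by
    intro S
    rw [← integral_finset_sum _ (fun T _ => (hTm T).1 S)]
    apply setIntegral_congr_fun hmeasp
    intro X hX
    obtain ⟨kx, hkx, huniq⟩ := exists_kx hAdisj hAcover hX
    simp only [one, mul_one]
    exact Phi_decomp A N S kx hkx huniq
  rw [Finset.sum_congr rfl fun S _ => step1 S, Finset.sum_comm]
  refine Finset.sum_congr rfl fun T _ => ?_
  have h2 := (hTm T).2
  simp only [mul_one] at h2 ⊢
  rw [h2, ← Finset.mul_prod_erase univ (fun β => (volume (A (T β).2)).toReal) (mem_univ α0)]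

lemma ip_phi_one_pos (hXm : MeasurableSet Xdom) (hXfin : volume Xdom ≠ ⊤)
    (hXpos : 0 < volume Xdom)
    (hAmeas : ∀ k, MeasurableSet (A k)) (hAsub : ∀ k, A k ⊆ Xdom)
    (hAdisj : Pairwise (Disjoint on A)) (hAcover : (⋃ k, A k) = Xdom)
    (hApos : ∀ k, 0 < volume (A k))
    (hns : 1 ≤ n_s) (hna : 1 ≤ n_a) (hN : N ∈ Mset n_s m n_a) :
    0 < ip Xdom (Phi (n_a := n_a) A N) (one d n_s n_a) := by
  rw [ip_phi_one_eq hXm hXfin hAmeas hAsub hAdisj hAcover hna N]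
  apply mul_pos
  · apply inv_pos.2
    apply pow_pos
    apply mul_pos (ENNReal.toReal_pos hXpos.ne' hXfin)
    exact_mod_cast Nat.cast_pos.mpr hns
  · refine Finset.sum_pos (fun T _ => ?_) (Types_nonempty hN)
    refine Finset.prod_pos fun β _ => ?_
    exact ENNReal.toReal_pos (hApos _).ne'
      (lt_of_le_of_lt (measure_mono (hAsub _)) hXfin.lt_top).ne

end AuxE


section AuxF

variable {d m n_s n_a : ℕ} {Xdom : Set (E d)} {A : Fin m → Set (E d)}
  {γ : Fin n_s → Fin n_s → E d → ℝ} {N M : Fin n_s → Fin m → ℤ}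

lemma update_pair_eq (S : Fin n_a → Fin n_s) (kx : Fin n_a → Fin m) (α : Fin n_a)
    (i : Fin n_s) :
    (fun β => ((update S α i) β, kx β)) = update (fun β => (S β, kx β)) α (i, kx α) := by
  funext β
  by_cases hβ : β = α
  · subst hβ; rw [update_self, update_self]
  · rw [update_of_ne hβ, update_of_ne hβ]

lemma diag_G2_zero (hAdisj : Pairwise (Disjoint on A)) (hAcover : (⋃ k, A k) = Xdom)
    (hγdiag : ∀ i x, γ i i x = 0)
    {X : Fin n_a → E d} (hX : X ∈ posSet Xdom n_a) (S : Fin n_a → Fin n_s) :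
    Phi A N X S * G2First γ (Phi A N) X S = 0 := by
  obtain ⟨kx, hkx, huniq⟩ := exists_kx hAdisj hAcover hX
  unfold G2First
  rw [Finset.mul_sum]
  refine Finset.sum_eq_zero fun i _ => ?_
  rw [Finset.mul_sum]
  refine Finset.sum_eq_zero fun j _ => ?_
  rw [Finset.mul_sum]
  refine Finset.sum_eq_zero fun α _ => ?_
  by_cases hij : i = j
  · subst hij; rw [hγdiag]; ring
  by_cases hs : S α = j
  · have hkey : Phi A N X S * Phi A N X (update S α i) = 0 := by
      rw [Phi_eq_ite A N S kx hkx huniq, Phi_eq_ite A N (update S α i) kx hkx huniq]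
      by_cases h1 : cntf (fun β => (S β, kx β)) = N
      · rw [if_pos h1, one_mul, if_neg]
        intro h2
        rw [update_pair_eq S kx α i] at h2
        have e1 : cntf (update (fun β => (S β, kx β)) α (i, kx α)) j (kx α) = N j (kx α) := by
          rw [h2]
        rw [cntf_update, if_neg (fun h => hij (Prod.ext_iff.mp h).1),
          if_pos (show (S α, kx α) = (j, kx α) by rw [hs])] at e1
        rw [show cntf (fun β => (S β, kx β)) j (kx α) = N j (kx α) from by rw [h1]] at e1
        omega
      · rw [if_neg h1, zero_mul]
    have hre : Phi A N X S * (deltaS j (S α) * γ i j (X α) * Phi A N X (update S α i))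
        = (deltaS j (S α) * γ i j (X α)) * (Phi A N X S * Phi A N X (update S α i)) := by
      ring
    rw [hre, hkey, mul_zero]
  · have hd : deltaS j (S α) = 0 := by simp [deltaS, hs]
    rw [hd]; ring

lemma diag_FPhi_decomp (hAdisj : Pairwise (Disjoint on A)) (hAcover : (⋃ k, A k) = Xdom)
    {X : Fin n_a → E d} (hX : X ∈ posSet Xdom n_a) (S : Fin n_a → Fin n_s) :
    (∑ i, ∑ j, ∑ α, fFirst γ i j α X S) * Phi A N X S
      = ∑ p ∈ Types n_s m n_a N ×ˢ (univ : Finset ((Fin n_s × Fin n_s) × Fin n_a)),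
          (∏ β, chiA A (p.1 β) (X β) (S β))
            * (deltaS p.2.1.1 (S p.2.2) * γ p.2.1.1 p.2.1.2 (X p.2.2)) := by
  obtain ⟨kx, hkx, huniq⟩ := exists_kx hAdisj hAcover hX
  rw [Finset.sum_product, Phi_decomp A N S kx hkx huniq, Finset.mul_sum]
  refine Finset.sum_congr rfl fun T _ => ?_
  have hF : (∑ i, ∑ j, ∑ α, fFirst γ i j α X S)
      = ∑ q : (Fin n_s × Fin n_s) × Fin n_a,
          deltaS q.1.1 (S q.2) * γ q.1.1 q.1.2 (X q.2) := by
    simp [Fintype.sum_prod_type, fFirst]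
  rw [hF, Finset.sum_mul]
  exact Finset.sum_congr rfl fun q _ => mul_comm _ _

lemma diag_comb (hApos : ∀ k, 0 < volume (A k)) (hAfin : ∀ k, volume (A k) ≠ ⊤) :
    ∑ p ∈ Types n_s m n_a N ×ˢ (univ : Finset ((Fin n_s × Fin n_s) × Fin n_a)),
        (if (p.1 p.2.2).1 = p.2.1.1 then ∫ x in A (p.1 p.2.2).2, γ p.2.1.1 p.2.1.2 x else 0)
          * ∏ β ∈ univ.erase p.2.2, (volume (A (p.1 β).2)).toReal
      = (∑ T ∈ Types n_s m n_a N, ∏ β, (volume (A (T β).2)).toReal)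
          * ∑ i, ∑ j, ∑ k, gammaK A γ i j k * ((N i k : ℤ) : ℝ) := by
  rw [Finset.sum_product, Finset.sum_mul]
  refine Finset.sum_congr rfl fun T hT => ?_
  have hcnt : cntf T = N := mem_Types.mp hT
  have e0 : ∑ q : (Fin n_s × Fin n_s) × Fin n_a,
      (if (T q.2).1 = q.1.1 then ∫ x in A (T q.2).2, γ q.1.1 q.1.2 x else 0)
        * ∏ β ∈ univ.erase q.2, (volume (A (T β).2)).toReal
      = ∑ ij : Fin n_s × Fin n_s, ∑ α,
        (if (T α).1 = ij.1 then ∫ x in A (T α).2, γ ij.1 ij.2 x else 0)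
          * ∏ β ∈ univ.erase α, (volume (A (T β).2)).toReal :=
    Fintype.sum_prod_type _
  rw [e0, Finset.sum_comm]
  have e1 : ∀ α : Fin n_a, (∑ ij : Fin n_s × Fin n_s,
      (if (T α).1 = ij.1 then ∫ x in A (T α).2, γ ij.1 ij.2 x else 0)
        * ∏ β ∈ univ.erase α, (volume (A (T β).2)).toReal)
      = ∑ j, gammaK A γ (T α).1 j (T α).2 * ∏ β, (volume (A (T β).2)).toReal := by
    intro α
    rw [Fintype.sum_prod_type]
    have h2 : ∀ i, (∑ j, (if (T α).1 = i then ∫ x in A (T α).2, γ i j x else 0)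
        * ∏ β ∈ univ.erase α, (volume (A (T β).2)).toReal)
        = if (T α).1 = i
          then (∑ j, gammaK A γ i j (T α).2 * ∏ β, (volume (A (T β).2)).toReal) else 0 := by
      intro i
      by_cases h : (T α).1 = i
      · rw [if_pos h]
        refine Finset.sum_congr rfl fun j _ => ?_
        rw [if_pos h, integral_gammaK hApos hAfin, mul_assoc,
          Finset.mul_prod_erase univ (fun β => (volume (A (T β).2)).toReal) (mem_univ α)]
      · rw [if_neg h]
        refine Finset.sum_eq_zero fun j _ => ?_
        rw [if_neg h, zero_mul]
    rw [Finset.sum_congr rfl fun i _ => h2 i,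
      Finset.sum_ite_eq univ (T α).1
        (fun i => ∑ j, gammaK A γ i j (T α).2 * ∏ β, (volume (A (T β).2)).toReal),
      if_pos (mem_univ _)]
  rw [Finset.sum_congr rfl fun α _ => e1 α, Finset.sum_comm]
  have e2 : ∀ j, (∑ α, gammaK A γ (T α).1 j (T α).2 * ∏ β, (volume (A (T β).2)).toReal)
      = (∑ t : Fin n_s × Fin m, ((N t.1 t.2 : ℤ) : ℝ) * gammaK A γ t.1 j t.2)
        * ∏ β, (volume (A (T β).2)).toReal := by
    intro j
    rw [← Finset.sum_mul]
    congr 1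
    rw [sum_comp_cntf T (fun t => gammaK A γ t.1 j t.2), hcnt]
  rw [Finset.sum_congr rfl fun j _ => e2 j, ← Finset.sum_mul, mul_comm]
  congr 1
  rw [Finset.sum_comm, Fintype.sum_prod_type]
  refine Finset.sum_congr rfl fun i _ => ?_
  rw [Finset.sum_comm]
  exact Finset.sum_congr rfl fun j _ => Finset.sum_congr rfl fun k _ => mul_comm _ _

lemma ip_diag (hXm : MeasurableSet Xdom) (hXfin : volume Xdom ≠ ⊤)
    (hAmeas : ∀ k, MeasurableSet (A k)) (hAsub : ∀ k, A k ⊆ Xdom)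
    (hAdisj : Pairwise (Disjoint on A)) (hAcover : (⋃ k, A k) = Xdom)
    (hApos : ∀ k, 0 < volume (A k))
    (hγdiag : ∀ i x, γ i i x = 0) (hγint : ∀ i j, IntegrableOn (γ i j) Xdom) :
    ip Xdom (Phi (n_a := n_a) A N) (GopFirst γ (Phi A N))
      = -(((((volume Xdom).toReal * n_s) ^ n_a)⁻¹ *
            ∑ T ∈ Types n_s m n_a N, ∏ β, (volume (A (T β).2)).toReal)
          * ∑ i, ∑ j, ∑ k, gammaK A γ i j k * ((N i k : ℤ) : ℝ)) := by
  have hmeasp : MeasurableSet (posSet Xdom n_a) := posSet_measurable hXm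
  have hAfin : ∀ k, volume (A k) ≠ ⊤ :=
    fun k => (lt_of_le_of_lt (measure_mono (hAsub k)) hXfin.lt_top).ne
  have hTm := fun (p : (Fin n_a → Fin n_s × Fin m) × ((Fin n_s × Fin n_s) × Fin n_a)) =>
    master (n_s := n_s) hXm hXfin hAmeas hAsub p.1 p.2.2
      (fun x s => deltaS p.2.1.1 s * γ p.2.1.1 p.2.1.2 x)
      (if (p.1 p.2.2).1 = p.2.1.1 then ∫ x in A (p.1 p.2.2).2, γ p.2.1.1 p.2.1.2 x else 0)
      (fun s => e2_int hAmeas hγint _ _ _ s)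
      (e2_val hAmeas hAsub _ _ _)
  have step1 : ∀ S : Fin n_a → Fin n_s,
      (∫ X in posSet Xdom n_a, Phi A N X S * GopFirst γ (Phi A N) X S)
        = -(∑ p ∈ Types n_s m n_a N ×ˢ (univ : Finset ((Fin n_s × Fin n_s) × Fin n_a)),
            ∫ X in posSet Xdom n_a, (∏ β, chiA A (p.1 β) (X β) (S β))
              * (deltaS p.2.1.1 (S p.2.2) * γ p.2.1.1 p.2.1.2 (X p.2.2))) := by
    intro S
    rw [← integral_finset_sum _ (fun p _ => (hTm p).1 S), ← integral_neg]
    apply setIntegral_congr_fun hmeasp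
    intro X hX
    have h1 : Phi A N X S * GopFirst γ (Phi A N) X S
        = -((∑ i, ∑ j, ∑ α, fFirst γ i j α X S) * (Phi A N X S * Phi A N X S))
          + Phi A N X S * G2First γ (Phi A N) X S := by
      unfold GopFirst G1First; ring
    refine h1.trans ?_
    rw [Phi_sq, diag_G2_zero hAdisj hAcover hγdiag hX S, add_zero,
      diag_FPhi_decomp hAdisj hAcover hX S]
  unfold ip
  rw [Finset.sum_congr rfl fun S _ => step1 S, Finset.sum_neg_distrib, Finset.sum_comm]
  rw [Finset.sum_congr rfl fun p _ => (hTm p).2]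
  rw [diag_comb hApos hAfin]
  ring

end AuxF


section AuxG

variable {d m n_s n_a : ℕ} {Xdom : Set (E d)} {A : Fin m → Set (E d)}
  {γ : Fin n_s → Fin n_s → E d → ℝ} {N M : Fin n_s → Fin m → ℤ}

lemma Emat_apply' (j : Fin n_s) (k : Fin m) (i' : Fin n_s) (k' : Fin m) :
    Emat j k i' k' = if (j,k) = (i',k') then (1:ℤ) else 0 := by
  unfold Emat
  by_cases h : i' = j ∧ k' = k
  · rw [if_pos h, if_pos (by rw [Prod.ext_iff]; exact ⟨h.1.symm, h.2.symm⟩)]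
  · rw [if_neg h,
      if_neg (fun hh => h ⟨(Prod.ext_iff.mp hh).1.symm, (Prod.ext_iff.mp hh).2.symm⟩)]

lemma Emat_entries {i0 j0 : Fin n_s} {k0 : Fin m}
    (hMeq : M = N + Emat j0 k0 - Emat i0 k0) (i' : Fin n_s) (k' : Fin m) :
    M i' k' = N i' k' + (if (j0,k0) = (i',k') then (1:ℤ) else 0)
      - (if (i0,k0) = (i',k') then 1 else 0) := by
  rw [hMeq]
  simp only [Pi.add_apply, Pi.sub_apply, Emat_apply']

lemma M_ne_N {i0 j0 : Fin n_s} {k0 : Fin m} (hij0 : i0 ≠ j0)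
    (hMt : ∀ i' k', M i' k' = N i' k' + (if (j0,k0) = (i',k') then (1:ℤ) else 0)
      - (if (i0,k0) = (i',k') then 1 else 0)) : M ≠ N := by
  intro h
  have h1 := hMt j0 k0
  rw [h, if_pos rfl, if_neg (fun hh => hij0 (Prod.ext_iff.mp hh).1)] at h1
  omega

lemma upd_cond_forces {i0 j0 : Fin n_s} {k0 : Fin m} (hij0 : i0 ≠ j0)
    (hMt : ∀ i' k', M i' k' = N i' k' + (if (j0,k0) = (i',k') then (1:ℤ) else 0)
        - (if (i0,k0) = (i',k') then 1 else 0))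
    {T0 : Fin n_a → Fin n_s × Fin m} (hcM : cntf T0 = M) {α : Fin n_a} {i j : Fin n_s}
    (hij : i ≠ j) {kα : Fin m} (hT0α : T0 α = (j, kα))
    (h2 : cntf (update T0 α (i, kα)) = N) :
    j = j0 ∧ i = i0 ∧ kα = k0 := by
  have hall : ∀ t : Fin n_s × Fin m,
      (if (j0,k0) = t then (1:ℤ) else 0) - (if (i0,k0) = t then 1 else 0)
        = (if (j,kα) = t then 1 else 0) - (if (i,kα) = t then 1 else 0) := by
    rintro ⟨t1, t2⟩
    have e1 := cntf_update T0 α (i, kα) t1 t2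
    rw [h2, hcM, hT0α] at e1
    have e2 := hMt t1 t2
    split_ifs at e1 e2 ⊢ <;> omega
  have hd := delta_pair_eq (a := (j0,k0)) (b := (i0,k0)) (a' := (j,kα)) (b' := (i,kα))
    (fun h => hij0 (Prod.ext_iff.mp h).1.symm) (fun h => hij (Prod.ext_iff.mp h).1.symm) hall
  exact ⟨(Prod.ext_iff.mp hd.1).1.symm, (Prod.ext_iff.mp hd.2).1.symm,
    (Prod.ext_iff.mp hd.1).2.symm⟩

lemma sum_swap3 {β : Type*} [AddCommMonoid β] (f : Fin n_s → Fin n_s → Fin n_a → β) :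
    ∑ i, ∑ j, ∑ α, f i j α = ∑ α, ∑ i, ∑ j, f i j α := by
  have h1 : ∀ i, ∑ j, ∑ α, f i j α = ∑ α, ∑ j, f i j α := fun i => Finset.sum_comm
  rw [Finset.sum_congr rfl fun i _ => h1 i]
  exact Finset.sum_comm

lemma offdiag_pointwise (hAdisj : Pairwise (Disjoint on A)) (hAcover : (⋃ k, A k) = Xdom)
    (hγdiag : ∀ i x, γ i i x = 0) {i0 j0 : Fin n_s} {k0 : Fin m} (hij0 : i0 ≠ j0)
    (hMt : ∀ i' k', M i' k' = N i' k' + (if (j0,k0) = (i',k') then (1:ℤ) else 0)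
      - (if (i0,k0) = (i',k') then 1 else 0))
    {X : Fin n_a → E d} (hX : X ∈ posSet Xdom n_a) (S : Fin n_a → Fin n_s) :
    Phi A M X S * G2First γ (Phi A N) X S
      = ∑ α, Phi A M X S * (deltaS j0 (S α) * (deltaA (A k0) (X α) * γ i0 j0 (X α))) := by
  obtain ⟨kx, hkx, huniq⟩ := exists_kx hAdisj hAcover hX
  by_cases hPM : cntf (fun β => (S β, kx β)) = M
  case neg =>
    have hPhiM : Phi A M X S = 0 := by rw [Phi_eq_ite A M S kx hkx huniq, if_neg hPM]
    simp [hPhiM]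
  case pos =>
    have hPhiM : Phi A M X S = 1 := by rw [Phi_eq_ite A M S kx hkx huniq, if_pos hPM]
    rw [hPhiM]
    simp only [one_mul]
    unfold G2First
    rw [sum_swap3 (fun i j α => deltaS j (S α) * γ i j (X α) * Phi A N X (update S α i))]
    refine Finset.sum_congr rfl fun α _ => ?_
    have hPhiupd : ∀ i : Fin n_s, Phi A N X (update S α i)
        = if cntf (update (fun β => (S β, kx β)) α (i, kx α)) = N then 1 else 0 := by
      intro i
      rw [Phi_eq_ite A N (update S α i) kx hkx huniq, update_pair_eq S kx α i]
    by_cases hs : S α = j0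
    · have key : ∀ i j, deltaS j (S α) * γ i j (X α) * Phi A N X (update S α i)
          = if i = i0 ∧ j = j0
            then deltaS j0 (S α) * (deltaA (A k0) (X α) * γ i0 j0 (X α)) else 0 := by
        intro i j
        by_cases hj : j = j0
        · by_cases hi : i = i0
          · rw [if_pos ⟨hi, hj⟩, hi, hj, hPhiupd i0]
            have hT0α : (S α, kx α) = (j0, kx α) := by rw [hs]
            by_cases hkk : kx α = k0
            · have hup : cntf (update (fun β => (S β, kx β)) α (i0, kx α)) = N := by
                funext t1 t2
                rw [cntf_update, hPM, hT0α, hMt t1 t2, hkk]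
                split_ifs <;> omega
              have hdA : deltaA (A k0) (X α) = 1 := by
                rw [deltaA, Set.indicator_of_mem (hkk ▸ hkx α)]
              rw [if_pos hup, hdA, hs]
              ring
            · have hnup : ¬ cntf (update (fun β => (S β, kx β)) α (i0, kx α)) = N := by
                intro h2
                obtain ⟨-, -, hk'⟩ := upd_cond_forces hij0 hMt hPM hij0 hT0α h2
                exact hkk hk'
              have hdA : deltaA (A k0) (X α) = 0 := by
                rw [deltaA, Set.indicator_of_notMem
                  (fun hm => hkk (huniq α k0 hm).symm)]
              rw [if_neg hnup, hdA]
              ring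
          · rw [if_neg (fun h => hi h.1)]
            by_cases hij : i = j
            · rw [hij, hγdiag]; ring
            · have hT0α : (S α, kx α) = (j, kx α) := by rw [hs, hj]
              rw [hPhiupd i]
              by_cases hup : cntf (update (fun β => (S β, kx β)) α (i, kx α)) = N
              · exfalso
                obtain ⟨-, hi', -⟩ := upd_cond_forces hij0 hMt hPM hij hT0α hup
                exact hi hi'
              · rw [if_neg hup]; ring
        · rw [if_neg (fun h => hj h.2)]
          have hd : deltaS j (S α) = 0 := by
            rw [hs, deltaS, if_neg (fun h => hj h.symm)]
          rw [hd]; ring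
      rw [Finset.sum_congr rfl fun i _ => Finset.sum_congr rfl fun j _ => key i j]
      simp [ite_and, Finset.sum_ite_eq', Finset.sum_ite_eq]
    · have hr : deltaS j0 (S α) = 0 := by rw [deltaS, if_neg hs]
      rw [hr, zero_mul]
      refine Finset.sum_eq_zero fun i _ => Finset.sum_eq_zero fun j _ => ?_
      by_cases hij : i = j
      · subst hij; rw [hγdiag]; ring
      by_cases hsj : S α = j
      · have hT0α : (S α, kx α) = (j, kx α) := by rw [hsj]
        rw [hPhiupd i]
        by_cases hup : cntf (update (fun β => (S β, kx β)) α (i, kx α)) = N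
        · exfalso
          obtain ⟨hj', -, -⟩ := upd_cond_forces hij0 hMt hPM hij hT0α hup
          exact hs (hsj.trans hj')
        · rw [if_neg hup]; ring
      · have hd : deltaS j (S α) = 0 := by rw [deltaS, if_neg hsj]
        rw [hd]; ring

end AuxG


section AuxH

variable {d m n_s n_a : ℕ} {Xdom : Set (E d)} {A : Fin m → Set (E d)}
  {γ : Fin n_s → Fin n_s → E d → ℝ} {N M : Fin n_s → Fin m → ℤ}

lemma offdiag_comb (hApos : ∀ k, 0 < volume (A k)) (hAfin : ∀ k, volume (A k) ≠ ⊤)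
    {i0 j0 : Fin n_s} {k0 : Fin m} (hij0 : i0 ≠ j0)
    (hMt : ∀ i' k', M i' k' = N i' k' + (if (j0,k0) = (i',k') then (1:ℤ) else 0)
      - (if (i0,k0) = (i',k') then 1 else 0)) :
    ∑ p ∈ Types n_s m n_a M ×ˢ (univ : Finset (Fin n_a)),
        (if p.1 p.2 = (j0,k0) then ∫ x in A k0, γ i0 j0 x else 0)
          * ∏ β ∈ univ.erase p.2, (volume (A (p.1 β).2)).toReal
      = (∑ T ∈ Types n_s m n_a N, ∏ β, (volume (A (T β).2)).toReal)
        * (gammaK A γ i0 j0 k0 * ((N i0 k0 : ℤ) : ℝ)) := by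
  classical
  have hflip : ∀ (P : Fin n_s → Fin m → ℤ) (c : Fin n_s × Fin m),
      (∑ p ∈ Types n_s m n_a P ×ˢ (univ : Finset (Fin n_a)),
        (if p.1 p.2 = c then (∫ x in A k0, γ i0 j0 x) else 0)
          * ∏ β ∈ univ.erase p.2, (volume (A (p.1 β).2)).toReal)
      = ∑ p ∈ (Types n_s m n_a P ×ˢ (univ : Finset (Fin n_a))).filter
          (fun p => p.1 p.2 = c),
        (∫ x in A k0, γ i0 j0 x) * ∏ β ∈ univ.erase p.2, (volume (A (p.1 β).2)).toReal := by
    intro P c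
    rw [Finset.sum_filter]
    refine Finset.sum_congr rfl fun p _ => ?_
    by_cases h : p.1 p.2 = c
    · rw [if_pos h, if_pos h]
    · rw [if_neg h, if_neg h, zero_mul]
  rw [hflip M (j0,k0)]
  have hbij : (∑ p ∈ (Types n_s m n_a M ×ˢ (univ : Finset (Fin n_a))).filter
          (fun p => p.1 p.2 = (j0,k0)),
        (∫ x in A k0, γ i0 j0 x) * ∏ β ∈ univ.erase p.2, (volume (A (p.1 β).2)).toReal)
      = ∑ p ∈ (Types n_s m n_a N ×ˢ (univ : Finset (Fin n_a))).filter
          (fun p => p.1 p.2 = (i0,k0)),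
        (∫ x in A k0, γ i0 j0 x) * ∏ β ∈ univ.erase p.2, (volume (A (p.1 β).2)).toReal := by
    refine Finset.sum_nbij' (fun p => (update p.1 p.2 (i0,k0), p.2))
      (fun p => (update p.1 p.2 (j0,k0), p.2)) ?_ ?_ ?_ ?_ ?_
    · intro p hp
      rw [Finset.mem_filter, Finset.mem_product] at hp ⊢
      obtain ⟨⟨hT, -⟩, hval⟩ := hp
      rw [mem_Types] at hT
      refine ⟨⟨?_, mem_univ _⟩, Function.update_self _ _ _⟩
      rw [mem_Types]
      funext t1 t2
      rw [cntf_update, hT, hval]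
      have := hMt t1 t2
      split_ifs at this ⊢ <;> omega
    · intro p hp
      rw [Finset.mem_filter, Finset.mem_product] at hp ⊢
      obtain ⟨⟨hT, -⟩, hval⟩ := hp
      rw [mem_Types] at hT
      refine ⟨⟨?_, mem_univ _⟩, Function.update_self _ _ _⟩
      rw [mem_Types]
      funext t1 t2
      rw [cntf_update, hT, hval]
      have := hMt t1 t2
      split_ifs at this ⊢ <;> omega
    · intro p hp
      dsimp only
      rw [Finset.mem_filter] at hp
      obtain ⟨-, hval⟩ := hp
      have h1 : update (update p.1 p.2 (i0,k0)) p.2 (j0,k0) = p.1 := by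
        rw [update_idem, ← hval, update_eq_self]
      rw [h1]
    · intro p hp
      dsimp only
      rw [Finset.mem_filter] at hp
      obtain ⟨-, hval⟩ := hp
      have h1 : update (update p.1 p.2 (j0,k0)) p.2 (i0,k0) = p.1 := by
        rw [update_idem, ← hval, update_eq_self]
      rw [h1]
    · intro p hp
      dsimp only
      congr 1
      refine Finset.prod_congr rfl fun β hβ => ?_
      rw [update_of_ne (mem_erase.mp hβ).1]
  rw [hbij, ← hflip N (i0,k0), Finset.sum_product, Finset.sum_mul]
  refine Finset.sum_congr rfl fun T hT => ?_
  have hcnt := mem_Types.mp hT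
  have e1 : ∀ α : Fin n_a, (if T α = (i0,k0) then (∫ x in A k0, γ i0 j0 x) else 0)
        * ∏ β ∈ univ.erase α, (volume (A (T β).2)).toReal
      = if T α = (i0,k0)
        then gammaK A γ i0 j0 k0 * ∏ β, (volume (A (T β).2)).toReal else 0 := by
    intro α
    by_cases h : T α = (i0,k0)
    · rw [if_pos h, if_pos h, integral_gammaK hApos hAfin, mul_assoc]
      congr 1
      have h2 : (volume (A k0)).toReal = (volume (A (T α).2)).toReal := by rw [h]
      rw [h2, Finset.mul_prod_erase univ (fun β => (volume (A (T β).2)).toReal) (mem_univ α)]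
    · rw [if_neg h, if_neg h, zero_mul]
  rw [Finset.sum_congr rfl fun α _ => e1 α, ← Finset.sum_filter, Finset.sum_const,
    nsmul_eq_mul]
  have h3 : ((univ.filter fun α => T α = (i0,k0)).card : ℝ) = ((N i0 k0 : ℤ) : ℝ) := by
    rw [← hcnt]
    simp [cntf]
  rw [h3]
  ring

lemma ip_offdiag (hXm : MeasurableSet Xdom) (hXfin : volume Xdom ≠ ⊤)
    (hAmeas : ∀ k, MeasurableSet (A k)) (hAsub : ∀ k, A k ⊆ Xdom)
    (hAdisj : Pairwise (Disjoint on A)) (hAcover : (⋃ k, A k) = Xdom)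
    (hApos : ∀ k, 0 < volume (A k))
    (hγdiag : ∀ i x, γ i i x = 0) (hγint : ∀ i j, IntegrableOn (γ i j) Xdom)
    {i0 j0 : Fin n_s} {k0 : Fin m} (hij0 : i0 ≠ j0)
    (hMeq : M = N + Emat j0 k0 - Emat i0 k0) :
    ip Xdom (Phi (n_a := n_a) A M) (GopFirst γ (Phi A N))
      = ((((volume Xdom).toReal * n_s) ^ n_a)⁻¹ *
          ∑ T ∈ Types n_s m n_a N, ∏ β, (volume (A (T β).2)).toReal)
        * (gammaK A γ i0 j0 k0 * ((N i0 k0 : ℤ) : ℝ)) := by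
  have hMt := Emat_entries hMeq
  have hMne := M_ne_N hij0 hMt
  have hmeasp : MeasurableSet (posSet Xdom n_a) := posSet_measurable hXm
  have hAfin : ∀ k, volume (A k) ≠ ⊤ :=
    fun k => (lt_of_le_of_lt (measure_mono (hAsub k)) hXfin.lt_top).ne
  have hTm := fun (p : (Fin n_a → Fin n_s × Fin m) × Fin n_a) =>
    master (n_s := n_s) hXm hXfin hAmeas hAsub p.1 p.2
      (fun x s => deltaS j0 s * (deltaA (A k0) x * γ i0 j0 x))
      (if p.1 p.2 = (j0,k0) then ∫ x in A k0, γ i0 j0 x else 0)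
      (fun s => e3_int hAmeas hγint _ i0 j0 k0 s)
      (e3_val hAmeas hAsub hAdisj _ i0 j0 k0)
  have step1 : ∀ S : Fin n_a → Fin n_s,
      (∫ X in posSet Xdom n_a, Phi A M X S * GopFirst γ (Phi A N) X S)
        = ∑ p ∈ Types n_s m n_a M ×ˢ (univ : Finset (Fin n_a)),
            ∫ X in posSet Xdom n_a, (∏ β, chiA A (p.1 β) (X β) (S β))
              * (deltaS j0 (S p.2) * (deltaA (A k0) (X p.2) * γ i0 j0 (X p.2))) := by
    intro S
    rw [← integral_finset_sum _ (fun p _ => (hTm p).1 S)]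
    apply setIntegral_congr_fun hmeasp
    intro X hX
    have h1 : Phi A M X S * GopFirst γ (Phi A N) X S
        = -((∑ i, ∑ j, ∑ α, fFirst γ i j α X S) * (Phi A M X S * Phi A N X S))
          + Phi A M X S * G2First γ (Phi A N) X S := by
      unfold GopFirst G1First; ring
    refine h1.trans ?_
    obtain ⟨kx, hkx, huniq⟩ := exists_kx hAdisj hAcover hX
    have hsum : (∑ α, Phi A M X S * (deltaS j0 (S α) * (deltaA (A k0) (X α) * γ i0 j0 (X α))))
        = ∑ p ∈ Types n_s m n_a M ×ˢ (univ : Finset (Fin n_a)),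
            (∏ β, chiA A (p.1 β) (X β) (S β))
              * (deltaS j0 (S p.2) * (deltaA (A k0) (X p.2) * γ i0 j0 (X p.2))) := by
      rw [Finset.sum_product, Finset.sum_comm]
      refine Finset.sum_congr rfl fun α _ => ?_
      rw [Phi_decomp A M S kx hkx huniq, Finset.sum_mul]
    rw [Phi_mul_Phi_zero hMne, mul_zero, neg_zero, zero_add,
      offdiag_pointwise hAdisj hAcover hγdiag hij0 hMt hX S, hsum]
  unfold ip
  rw [Finset.sum_congr rfl fun S _ => step1 S, Finset.sum_comm,
    Finset.sum_congr rfl fun p _ => (hTm p).2,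
    offdiag_comb hApos hAfin hij0 hMt]
  ring

lemma ip_zero_case (hXm : MeasurableSet Xdom)
    (hAdisj : Pairwise (Disjoint on A)) (hAcover : (⋃ k, A k) = Xdom)
    (hγdiag : ∀ i x, γ i i x = 0) (hMN : M ≠ N)
    (hnot : ¬∃ (i j : Fin n_s) (k : Fin m), i ≠ j ∧ M = N + Emat j k - Emat i k) :
    ip Xdom (Phi (n_a := n_a) A M) (GopFirst γ (Phi A N)) = 0 := by
  unfold ip
  have hmeasp : MeasurableSet (posSet Xdom n_a) := posSet_measurable hXm
  have hz : ∀ S : Fin n_a → Fin n_s,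
      (∫ X in posSet Xdom n_a, Phi A M X S * GopFirst γ (Phi A N) X S) = 0 := by
    intro S
    have h0 : (∫ X in posSet Xdom n_a, (0:ℝ)) = 0 := integral_zero _ _
    rw [← h0]
    apply setIntegral_congr_fun hmeasp
    intro X hX
    obtain ⟨kx, hkx, huniq⟩ := exists_kx hAdisj hAcover hX
    have h1 : Phi A M X S * GopFirst γ (Phi A N) X S
        = -((∑ i, ∑ j, ∑ α, fFirst γ i j α X S) * (Phi A M X S * Phi A N X S))
          + Phi A M X S * G2First γ (Phi A N) X S := by
      unfold GopFirst G1First; ring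
    refine h1.trans ?_
    rw [Phi_mul_Phi_zero hMN, mul_zero, neg_zero, zero_add]
    unfold G2First
    rw [Finset.mul_sum]
    refine Finset.sum_eq_zero fun i _ => ?_
    rw [Finset.mul_sum]
    refine Finset.sum_eq_zero fun j _ => ?_
    rw [Finset.mul_sum]
    refine Finset.sum_eq_zero fun α _ => ?_
    by_cases hij : i = j
    · rw [hij, hγdiag]; ring
    by_cases hsj : S α = j
    · rw [Phi_eq_ite A M S kx hkx huniq, Phi_eq_ite A N (update S α i) kx hkx huniq,
        update_pair_eq S kx α i]
      by_cases hcM : cntf (fun β => (S β, kx β)) = M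
      · by_cases hup : cntf (update (fun β => (S β, kx β)) α (i, kx α)) = N
        · exfalso
          apply hnot
          refine ⟨i, j, kx α, hij, ?_⟩
          funext t1 t2
          have e1 := cntf_update (fun β => (S β, kx β)) α (i, kx α) t1 t2
          rw [hup, hcM] at e1
          rw [show (S α, kx α) = (j, kx α) from by rw [hsj]] at e1
          simp only [Pi.add_apply, Pi.sub_apply, Emat_apply']
          split_ifs at e1 ⊢ <;> omega
        · rw [if_neg hup]; ring
      · rw [if_neg hcM]; ring
    · have hd : deltaS j (S α) = 0 := by rw [deltaS, if_neg hsj]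
      rw [hd]; ring
  rw [Finset.sum_congr rfl fun S _ => hz S, Finset.sum_const_zero, mul_zero]

end AuxH

/-- the matrix representation `Ĝ_{NM} = ⟨Φ_M, G Φ_N⟩/⟨Φ_N, 𝟙⟩` of the
projected first-order adoption generator is: `γ_{ij}^{(k)} N_i^{(k)}` if
`M = N + E_j^{(k)} − E_i^{(k)}` with `i ≠ j`; `−∑_{i,j} ∑_k γ_{ij}^{(k)} N_i^{(k)}` if
`M = N`; and `0` otherwise. -/
theorem statement9 (d m n_s n_a : ℕ) (hns : 1 ≤ n_s) (hna : 1 ≤ n_a)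
    (Xdom : Set (E d)) (hXcomp : IsCompact Xdom) (hXpos : 0 < volume Xdom)
    (A : Fin m → Set (E d)) (hAmeas : ∀ k, MeasurableSet (A k))
    (hAdisj : Pairwise (Disjoint on A)) (hApos : ∀ k, 0 < volume (A k))
    (hAcover : (⋃ k, A k) = Xdom)
    (γ : Fin n_s → Fin n_s → E d → ℝ)
    (hγnonneg : ∀ i j x, 0 ≤ γ i j x) (hγdiag : ∀ i x, γ i i x = 0)
    (hγint : ∀ i j, IntegrableOn (γ i j) Xdom)
    (N M : Fin n_s → Fin m → ℤ)
    (hN : N ∈ Mset n_s m n_a) (hM : M ∈ Mset n_s m n_a) :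
    (∀ (i j : Fin n_s) (k : Fin m), i ≠ j → M = N + Emat j k - Emat i k →
      ip Xdom (Phi (n_a := n_a) A M) (GopFirst γ (Phi A N))
          / ip Xdom (Phi (n_a := n_a) A N) (one d n_s n_a)
        = gammaK A γ i j k * (N i k : ℝ)) ∧
    (ip Xdom (Phi (n_a := n_a) A N) (GopFirst γ (Phi A N))
          / ip Xdom (Phi (n_a := n_a) A N) (one d n_s n_a)
        = -∑ i : Fin n_s, ∑ j : Fin n_s, ∑ k : Fin m, gammaK A γ i j k * (N i k : ℝ)) ∧
    ((M ≠ N ∧ ¬∃ (i j : Fin n_s) (k : Fin m), i ≠ j ∧ M = N + Emat j k - Emat i k) →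
      ip Xdom (Phi (n_a := n_a) A M) (GopFirst γ (Phi A N))
          / ip Xdom (Phi (n_a := n_a) A N) (one d n_s n_a) = 0) := by
  have hXm : MeasurableSet Xdom := hXcomp.isClosed.measurableSet
  have hXfin : volume Xdom ≠ ⊤ := hXcomp.measure_lt_top.ne
  have hAsub : ∀ k, A k ⊆ Xdom := fun k => hAcover ▸ Set.subset_iUnion A k
  have hDpos := ip_phi_one_pos hXm hXfin hXpos hAmeas hAsub hAdisj hAcover hApos hns hna hN
  have hDeq := ip_phi_one_eq hXm hXfin hAmeas hAsub hAdisj hAcover hna N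
  have hD0 : ((((volume Xdom).toReal * n_s) ^ n_a)⁻¹ *
      ∑ T ∈ Types n_s m n_a N, ∏ β, (volume (A (T β).2)).toReal) ≠ 0 := by
    rw [← hDeq]; exact hDpos.ne'
  refine ⟨?_, ?_, ?_⟩
  · intro i j k hij hMeq
    rw [ip_offdiag hXm hXfin hAmeas hAsub hAdisj hAcover hApos hγdiag hγint hij hMeq, hDeq]
    exact mul_div_cancel_left₀ _ hD0
  · rw [ip_diag hXm hXfin hAmeas hAsub hAdisj hAcover hApos hγdiag hγint, hDeq, neg_div]
    rw [mul_div_cancel_left₀ _ hD0]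
  · rintro ⟨hMN, hnot⟩
    rw [ip_zero_case hXm hAdisj hAcover hγdiag hMN hnot, zero_div]


end ABMFormal
end

section
/- Define (G₁ p)(X, S) = ∑_{i,j=1}^{n_s} ∑_{α=1}^{n_a} f_{ij}^{(α)}(X, S) p(X, S) with the first-order rate functions f_{ij}^{(α)}(X, S) = δ_i(s_α) γ_{ij}(x_α). Then for all M, N ∈ M_{n_a}: ⟨Φ_M, G₁ Φ_N⟩ = ∑_{i,j=1}^{n_s} ∑_{k=1}^{m} γ_{ij}^{(k)} N_i^{(k)} ⟨Φ_N, Φ_N⟩ if M = N, and ⟨Φ_M, G₁ Φ_N⟩ = 0 if M ≠ N. -/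
open MeasureTheory Finset Function

namespace ABMFormal

section StatementTenAux

variable {d m n_s n_a : ℕ} {A : Fin m → Set (E d)} {Xdom : Set (E d)}

/-- The product "box" `∏_α A_{κ(α)}` in configuration space. -/
def box (A : Fin m → Set (E d)) (κ : Fin n_a → Fin m) : Set (Fin n_a → E d) :=
  Set.univ.pi fun α => A (κ α)

/-- Occupation numbers determined by a cell assignment `κ` and statuses `S`. -/
noncomputable def cnt (S : Fin n_a → Fin n_s) (κ : Fin n_a → Fin m)
    (i : Fin n_s) (k : Fin m) : ℕ :=
  Set.ncard {α : Fin n_a | κ α = k ∧ S α = i}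

lemma box_meas (hA : ∀ k, MeasurableSet (A k)) (κ : Fin n_a → Fin m) :
    MeasurableSet (box A κ) := MeasurableSet.univ_pi fun α => hA (κ α)

lemma A_eq_of_mem (hdisj : Pairwise (Disjoint on A)) {x : E d} {k k' : Fin m}
    (h : x ∈ A k) (h' : x ∈ A k') : k = k' := by
  by_contra hkk
  exact Set.disjoint_left.mp (hdisj hkk) h h'

lemma box_disjoint (hdisj : Pairwise (Disjoint on A)) :
    Pairwise (Disjoint on (box A (n_a := n_a))) := by
  intro κ κ' h
  rw [Function.onFun, Set.disjoint_left]
  intro X hX hX'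
  exact h (funext fun α => A_eq_of_mem hdisj (hX α (Set.mem_univ α)) (hX' α (Set.mem_univ α)))

lemma posSet_eq_iUnion (hcover : (⋃ k, A k) = Xdom) :
    posSet Xdom n_a = ⋃ κ : Fin n_a → Fin m, box A κ := by
  ext X
  simp only [posSet, box, Set.mem_pi, Set.mem_univ, forall_true_left, Set.mem_iUnion]
  constructor
  · intro h
    have h' : ∀ α, ∃ k, X α ∈ A k := fun α => Set.mem_iUnion.mp (hcover ▸ h α)
    exact ⟨fun α => (h' α).choose, fun α => (h' α).choose_spec⟩
  · rintro ⟨κ, hκ⟩ α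
    rw [← hcover]
    exact Set.mem_iUnion.2 ⟨κ α, hκ α⟩

lemma vol_A_ne_top (hXcomp : IsCompact Xdom) (hcover : (⋃ k, A k) = Xdom) (k : Fin m) :
    volume (A k) ≠ ⊤ :=
  ne_top_of_le_ne_top hXcomp.measure_lt_top.ne
    (measure_mono (hcover ▸ Set.subset_iUnion A k))

lemma box_indicator_eval (κ : Fin n_a → Fin m) (α : Fin n_a) (f : E d → ℝ) (X : Fin n_a → E d) :
    (box A κ).indicator (fun X => f (X α)) X
      = ∏ β, (if β = α then (A (κ β)).indicator f (X β)
          else (A (κ β)).indicator (fun _ => (1:ℝ)) (X β)) := by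
  by_cases hX : X ∈ box A κ
  · rw [Set.indicator_of_mem hX]
    rw [← Finset.mul_prod_erase Finset.univ _ (Finset.mem_univ α)]
    rw [if_pos rfl, Set.indicator_of_mem (hX α (Set.mem_univ α))]
    have h1 : ∀ β ∈ Finset.univ.erase α,
        (if β = α then (A (κ β)).indicator f (X β)
          else (A (κ β)).indicator (fun _ => (1:ℝ)) (X β)) = 1 := by
      intro β hβ
      rw [if_neg (Finset.ne_of_mem_erase hβ), Set.indicator_of_mem (hX β (Set.mem_univ β))]
    rw [Finset.prod_congr rfl h1, Finset.prod_const_one, mul_one]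
  · rw [Set.indicator_of_notMem hX]
    obtain ⟨β, hβ⟩ : ∃ β, X β ∉ A (κ β) := by
      by_contra h
      push_neg at h
      exact hX fun β _ => h β
    refine (Finset.prod_eq_zero (Finset.mem_univ β) ?_).symm
    by_cases hβα : β = α
    · rw [if_pos hβα, Set.indicator_of_notMem hβ]
    · rw [if_neg hβα, Set.indicator_of_notMem hβ]

lemma integral_box_eval (hAmeas : ∀ k, MeasurableSet (A k)) (κ : Fin n_a → Fin m)
    (α : Fin n_a) (f : E d → ℝ) :
    ∫ X in box A κ, f (X α)
      = (∫ x in A (κ α), f x) * ∏ β ∈ Finset.univ.erase α, (volume (A (κ β))).toReal := by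
  rw [← integral_indicator (box_meas hAmeas κ)]
  have h0 : ((box A κ).indicator fun X => f (X α))
      = fun X => ∏ β, (fun (β : Fin n_a) (x : E d) => if β = α then (A (κ β)).indicator f x
          else (A (κ β)).indicator (fun _ => (1:ℝ)) x) β (X β) :=
    funext (box_indicator_eval κ α f)
  have h1 := MeasureTheory.integral_fintype_prod_eq_prod (𝕜 := ℝ) (ι := Fin n_a)
    (E := fun _ => E d) (μ := fun _ => volume) (fun β x => if β = α then (A (κ β)).indicator f x
          else (A (κ β)).indicator (fun _ => (1:ℝ)) x)
  simp only [h0]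
  rw [volume_pi, h1]
  rw [← Finset.mul_prod_erase Finset.univ _ (Finset.mem_univ α)]
  congr 1
  · have h2 : ∀ x : E d, (if α = α then (A (κ α)).indicator f x
        else (A (κ α)).indicator (fun _ => (1:ℝ)) x) = (A (κ α)).indicator f x :=
      fun x => if_pos rfl
    simp only [h2, if_true]
    rw [integral_indicator (hAmeas (κ α))]
  · refine Finset.prod_congr rfl fun β hβ => ?_
    have h2 : ∀ x : E d, (if β = α then (A (κ β)).indicator f x
        else (A (κ β)).indicator (fun _ => (1:ℝ)) x)
          = (A (κ β)).indicator (fun _ => (1:ℝ)) x :=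
      fun x => if_neg (Finset.ne_of_mem_erase hβ)
    simp only [h2]
    rw [integral_indicator (hAmeas (κ β)), setIntegral_const, smul_eq_mul, mul_one, measureReal_def]

lemma integrableOn_box_eval (hAmeas : ∀ k, MeasurableSet (A k))
    (hfin : ∀ k, volume (A k) ≠ ⊤) {f : E d → ℝ} (hf : ∀ k, IntegrableOn f (A k))
    (κ : Fin n_a → Fin m) (α : Fin n_a) :
    IntegrableOn (fun X => f (X α)) (box A κ) := by
  refine (integrable_indicator_iff (box_meas hAmeas κ)).mp ?_
  have h0 : ((box A κ).indicator fun X => f (X α))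
      = fun X => ∏ β, (fun (β : Fin n_a) (x : E d) => if β = α then (A (κ β)).indicator f x
          else (A (κ β)).indicator (fun _ => (1:ℝ)) x) β (X β) :=
    funext (box_indicator_eval κ α f)
  simp only [h0]
  refine Integrable.fintype_prod_dep (𝕜 := ℝ) (ι := Fin n_a) (E := fun _ => E d)
    (f := fun β x => if β = α then (A (κ β)).indicator f x
      else (A (κ β)).indicator (fun _ => (1:ℝ)) x) fun β => ?_
  by_cases hβ : β = α
  · simp only [if_pos hβ]
    exact (integrable_indicator_iff (hAmeas (κ β))).mpr (hf (κ β))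
  · simp only [if_neg hβ]
    exact (integrable_indicator_iff (hAmeas (κ β))).mpr
      (integrableOn_const (hfin (κ β)))

lemma occ_on_box (hdisj : Pairwise (Disjoint on A)) {κ : Fin n_a → Fin m} {X : Fin n_a → E d}
    (hX : X ∈ box A κ) (S : Fin n_a → Fin n_s) (i : Fin n_s) (k : Fin m) :
    occ A X S i k = cnt S κ i k := by
  unfold occ cnt
  congr 1
  ext α
  simp only [Set.mem_setOf_eq]
  constructor
  · rintro ⟨hx, hs⟩
    exact ⟨A_eq_of_mem hdisj (hX α (Set.mem_univ α)) hx, hs⟩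
  · rintro ⟨rfl, hs⟩
    exact ⟨hX α (Set.mem_univ α), hs⟩

lemma Phi_on_box (hdisj : Pairwise (Disjoint on A)) {κ : Fin n_a → Fin m} {X : Fin n_a → E d}
    (hX : X ∈ box A κ) (N : Fin n_s → Fin m → ℤ) (S : Fin n_a → Fin n_s) :
    Phi A N X S = if ∀ i k, ((cnt S κ i k : ℕ) : ℤ) = N i k then 1 else 0 := by
  simp only [Phi, occ_on_box hdisj hX S]

lemma cnt_cast_sum (S : Fin n_a → Fin n_s) (κ : Fin n_a → Fin m) (i : Fin n_s) (k : Fin m) :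
    (cnt S κ i k : ℝ) = ∑ α, (if κ α = k ∧ S α = i then (1:ℝ) else 0) := by
  classical
  unfold cnt
  rw [Set.ncard_eq_toFinset_card', Set.toFinset_setOf, Finset.card_filter]
  push_cast
  rfl

lemma sum_delta_eq (S : Fin n_a → Fin n_s) (κ : Fin n_a → Fin m) (i : Fin n_s) (g : Fin m → ℝ) :
    ∑ α, deltaS i (S α) * g (κ α) = ∑ k, (cnt S κ i k : ℝ) * g k := by
  simp_rw [cnt_cast_sum, Finset.sum_mul]
  rw [Finset.sum_comm]
  refine Finset.sum_congr rfl fun α _ => ?_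
  by_cases hs : S α = i
  · simp [deltaS, hs, ite_mul, Finset.sum_ite_eq]
  · simp [deltaS, hs]

lemma box_main (hAmeas : ∀ k, MeasurableSet (A k)) (hdisj : Pairwise (Disjoint on A))
    (hfin : ∀ k, volume (A k) ≠ ⊤) (hApos : ∀ k, 0 < volume (A k))
    (γ : Fin n_s → Fin n_s → E d → ℝ) (hγA : ∀ i j k, IntegrableOn (γ i j) (A k))
    (N : Fin n_s → Fin m → ℤ) (S : Fin n_a → Fin n_s) (κ : Fin n_a → Fin m) :
    ∫ X in box A κ, Phi A N X S * ((∑ i, ∑ j, ∑ α, deltaS i (S α) * γ i j (X α)) * Phi A N X S)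
      = (∑ i, ∑ j, ∑ k, gammaK A γ i j k * (N i k : ℝ)) *
          ∫ X in box A κ, Phi A N X S * Phi A N X S := by
  set c : ℝ := if ∀ i k, ((cnt S κ i k : ℕ) : ℤ) = N i k then 1 else 0 with hcdef
  have hPhi : ∀ X ∈ box A κ, Phi A N X S = c := fun X hX => Phi_on_box hdisj hX N S
  have hR : ∫ X in box A κ, Phi A N X S * Phi A N X S
      = (c * c) * ∏ β, (volume (A (κ β))).toReal := by
    rw [setIntegral_congr_fun (box_meas hAmeas κ)
      (fun X hX => by rw [hPhi X hX] : Set.EqOn _ (fun _ => c * c) _)]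
    rw [setIntegral_const, smul_eq_mul, box, measureReal_def, volume_pi_pi, ENNReal.toReal_prod, mul_comm]
  have hL1 : Set.EqOn
      (fun X => Phi A N X S * ((∑ i, ∑ j, ∑ α, deltaS i (S α) * γ i j (X α)) * Phi A N X S))
      (fun X => (c * c) * ∑ i, ∑ j, ∑ α, deltaS i (S α) * γ i j (X α)) (box A κ) := by
    intro X hX
    simp only [hPhi X hX]
    ring
  have hterm : ∀ (i j : Fin n_s) (α : Fin n_a),
      Integrable (fun X => deltaS i (S α) * γ i j (X α)) (volume.restrict (box A κ)) :=
    fun i j α => (integrableOn_box_eval hAmeas hfin (fun k => hγA i j k) κ α).const_mul _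
  have hIF : ∫ X in box A κ, (∑ i, ∑ j, ∑ α, deltaS i (S α) * γ i j (X α))
      = ∑ i, ∑ j, ∑ α, deltaS i (S α) * ((∫ x in A (κ α), γ i j x) *
          ∏ β ∈ Finset.univ.erase α, (volume (A (κ β))).toReal) := by
    rw [integral_finset_sum _ fun i _ => integrable_finset_sum _ fun j _ =>
      integrable_finset_sum _ fun α _ => hterm i j α]
    refine Finset.sum_congr rfl fun i _ => ?_
    rw [integral_finset_sum _ fun j _ => integrable_finset_sum _ fun α _ => hterm i j α]
    refine Finset.sum_congr rfl fun j _ => ?_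
    rw [integral_finset_sum _ fun α _ => hterm i j α]
    refine Finset.sum_congr rfl fun α _ => ?_
    rw [MeasureTheory.integral_const_mul, integral_box_eval hAmeas κ α]
  rw [hR, setIntegral_congr_fun (box_meas hAmeas κ) hL1, MeasureTheory.integral_const_mul, hIF]
  by_cases hcnt : ∀ i k, ((cnt S κ i k : ℕ) : ℤ) = N i k
  · have hc1 : c = 1 := if_pos hcnt
    rw [hc1]
    simp only [one_mul, mul_one]
    have hIA : ∀ (i j : Fin n_s) (k : Fin m),
        ∫ x in A k, γ i j x = gammaK A γ i j k * (volume (A k)).toReal := by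
      intro i j k
      have h0 : (volume (A k)).toReal ≠ 0 :=
        (ENNReal.toReal_pos (hApos k).ne' (hfin k)).ne'
      rw [gammaK, div_mul_cancel₀ _ h0]
    have hstep : ∀ i j : Fin n_s,
        ∑ α, deltaS i (S α) * ((∫ x in A (κ α), γ i j x) *
            ∏ β ∈ Finset.univ.erase α, (volume (A (κ β))).toReal)
          = (∑ k, gammaK A γ i j k * (N i k : ℝ)) * ∏ β, (volume (A (κ β))).toReal := by
      intro i j
      have h3 : ∀ α, deltaS i (S α) * ((∫ x in A (κ α), γ i j x) *
            ∏ β ∈ Finset.univ.erase α, (volume (A (κ β))).toReal)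
          = deltaS i (S α) * gammaK A γ i j (κ α) * ∏ β, (volume (A (κ β))).toReal := by
        intro α
        rw [hIA, ← Finset.mul_prod_erase Finset.univ
          (fun β => (volume (A (κ β))).toReal) (Finset.mem_univ α)]
        ring
      rw [Finset.sum_congr rfl fun α _ => h3 α, ← Finset.sum_mul]
      congr 1
      have h4 : ∑ α, deltaS i (S α) * gammaK A γ i j (κ α)
          = ∑ k, (cnt S κ i k : ℝ) * gammaK A γ i j k := sum_delta_eq S κ i _
      rw [h4]
      refine Finset.sum_congr rfl fun k _ => ?_
      have h5 : (cnt S κ i k : ℝ) = (N i k : ℝ) := by exact_mod_cast hcnt i k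
      rw [h5, mul_comm]
    rw [Finset.sum_congr rfl fun i _ => Finset.sum_congr rfl fun j _ => hstep i j]
    simp only [Finset.sum_mul]
  · have hc0 : c = 0 := if_neg hcnt
    rw [hc0]
    simp

lemma perS (hXcomp : IsCompact Xdom) (hAmeas : ∀ k, MeasurableSet (A k))
    (hdisj : Pairwise (Disjoint on A)) (hApos : ∀ k, 0 < volume (A k))
    (hcover : (⋃ k, A k) = Xdom)
    (γ : Fin n_s → Fin n_s → E d → ℝ) (hγint : ∀ i j, IntegrableOn (γ i j) Xdom)
    (N : Fin n_s → Fin m → ℤ) (S : Fin n_a → Fin n_s) :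
    ∫ X in posSet Xdom n_a,
        Phi A N X S * ((∑ i, ∑ j, ∑ α, deltaS i (S α) * γ i j (X α)) * Phi A N X S)
      = (∑ i, ∑ j, ∑ k, gammaK A γ i j k * (N i k : ℝ)) *
          ∫ X in posSet Xdom n_a, Phi A N X S * Phi A N X S := by
  have hfin : ∀ k, volume (A k) ≠ ⊤ := vol_A_ne_top hXcomp hcover
  have hγA : ∀ i j k, IntegrableOn (γ i j) (A k) := fun i j k =>
    (hγint i j).mono_set (hcover ▸ Set.subset_iUnion A k)
  have hboxfin : ∀ κ : Fin n_a → Fin m, volume (box A κ) < ⊤ := by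
    intro κ
    rw [box, volume_pi_pi]
    exact ENNReal.prod_lt_top fun β _ => lt_top_iff_ne_top.mpr (hfin (κ β))
  have hbox1 : ∀ κ : Fin n_a → Fin m, IntegrableOn
      (fun X => Phi A N X S * ((∑ i, ∑ j, ∑ α, deltaS i (S α) * γ i j (X α)) * Phi A N X S))
      (box A κ) := by
    intro κ
    set c : ℝ := if ∀ i k, ((cnt S κ i k : ℕ) : ℤ) = N i k then 1 else 0 with hcdef
    have base : IntegrableOn
        (fun X => (c * c) * ∑ i, ∑ j, ∑ α, deltaS i (S α) * γ i j (X α)) (box A κ) :=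
      (integrable_finset_sum _ fun i _ => integrable_finset_sum _ fun j _ =>
        integrable_finset_sum _ fun α _ =>
          (integrableOn_box_eval hAmeas hfin (fun k => hγA i j k) κ α).const_mul
            (deltaS i (S α))).const_mul _
    refine base.congr_fun ?_ (box_meas hAmeas κ)
    intro X hX
    simp only [Phi_on_box hdisj hX N S, ← hcdef]
    ring
  have hbox2 : ∀ κ : Fin n_a → Fin m,
      IntegrableOn (fun X => Phi A N X S * Phi A N X S) (box A κ) := by
    intro κ
    set c : ℝ := if ∀ i k, ((cnt S κ i k : ℕ) : ℤ) = N i k then 1 else 0 with hcdef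
    have base : IntegrableOn (fun _ : Fin n_a → E d => c * c) (box A κ) :=
      integrableOn_const (hboxfin κ).ne
    refine base.congr_fun ?_ (box_meas hAmeas κ)
    intro X hX
    simp only [Phi_on_box hdisj hX N S, ← hcdef]
  rw [posSet_eq_iUnion hcover,
    integral_iUnion (box_meas hAmeas) (box_disjoint hdisj)
      ((integrableOn_finite_iUnion (f := fun X => Phi A N X S *
        ((∑ i, ∑ j, ∑ α, deltaS i (S α) * γ i j (X α)) * Phi A N X S))).mpr hbox1),
    integral_iUnion (box_meas hAmeas) (box_disjoint hdisj)
      ((integrableOn_finite_iUnion (f := fun X => Phi A N X S * Phi A N X S)).mpr hbox2),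
    tsum_fintype, tsum_fintype, Finset.mul_sum]
  exact Finset.sum_congr rfl fun κ _ => box_main hAmeas hdisj hfin hApos γ hγA N S κ

end StatementTenAux

/-- for the outflow part `G₁` of the first-order adoption generator,
`⟨Φ_M, G₁ Φ_N⟩ = (∑_{i,j} ∑_k γ_{ij}^{(k)} N_i^{(k)}) ⟨Φ_N, Φ_N⟩` if `M = N`, and
`⟨Φ_M, G₁ Φ_N⟩ = 0` if `M ≠ N`. -/
theorem statement10 (d m n_s n_a : ℕ) (hns : 1 ≤ n_s) (hna : 1 ≤ n_a)
    (Xdom : Set (E d)) (hXcomp : IsCompact Xdom) (hXpos : 0 < volume Xdom)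
    (A : Fin m → Set (E d)) (hAmeas : ∀ k, MeasurableSet (A k))
    (hAdisj : Pairwise (Disjoint on A)) (hApos : ∀ k, 0 < volume (A k))
    (hAcover : (⋃ k, A k) = Xdom)
    (γ : Fin n_s → Fin n_s → E d → ℝ)
    (hγnonneg : ∀ i j x, 0 ≤ γ i j x) (hγdiag : ∀ i x, γ i i x = 0)
    (hγint : ∀ i j, IntegrableOn (γ i j) Xdom)
    (M N : Fin n_s → Fin m → ℤ)
    (hM : M ∈ Mset n_s m n_a) (hN : N ∈ Mset n_s m n_a) :
    (M = N →
      ip Xdom (Phi (n_a := n_a) A M) (G1First γ (Phi A N))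
        = (∑ i : Fin n_s, ∑ j : Fin n_s, ∑ k : Fin m, gammaK A γ i j k * (N i k : ℝ)) *
            ip Xdom (Phi (n_a := n_a) A N) (Phi A N)) ∧
    (M ≠ N → ip Xdom (Phi (n_a := n_a) A M) (G1First γ (Phi A N)) = 0) := by
  constructor
  · rintro rfl
    simp only [ip, G1First, fFirst]
    have h1 : ∑ S : Fin n_a → Fin n_s, ∫ X in posSet Xdom n_a,
          Phi A M X S * ((∑ i, ∑ j, ∑ α, deltaS i (S α) * γ i j (X α)) * Phi A M X S)
        = (∑ i, ∑ j, ∑ k, gammaK A γ i j k * (M i k : ℝ)) *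
            ∑ S : Fin n_a → Fin n_s, ∫ X in posSet Xdom n_a, Phi A M X S * Phi A M X S := by
      rw [Finset.mul_sum]
      exact Finset.sum_congr rfl fun S _ =>
        perS hXcomp hAmeas hAdisj hApos hAcover γ hγint M S
    rw [h1]
    ring
  · intro hMN
    have h0 : ∀ (S : Fin n_a → Fin n_s) (X : Fin n_a → E d),
        Phi A M X S * ((∑ i, ∑ j, ∑ α, fFirst γ i j α X S) * Phi A N X S) = 0 := by
      intro S X
      by_cases hM1 : ∀ i k, ((occ A X S i k : ℕ) : ℤ) = M i k
      · by_cases hN1 : ∀ i k, ((occ A X S i k : ℕ) : ℤ) = N i k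
        · exact absurd (funext fun i => funext fun k =>
            (hM1 i k).symm.trans (hN1 i k)) hMN
        · simp [Phi, hN1]
      · simp [Phi, hM1]
    simp only [ip, G1First]
    simp only [h0, integral_zero, Finset.sum_const_zero, mul_zero]

end ABMFormal
end

section
/- Define (G₂ p)(X, S) = ∑_{i,j=1}^{n_s} ∑_{α=1}^{n_a} f_{ij}^{(α)}(X, S + i e_α − j e_α) p(X, S + i e_α − j e_α) with the first-order rate functions f_{ij}^{(α)}(X, S) = δ_i(s_α) γ_{ij}(x_α), where S + i e_α − j e_α denotes coordinatewise integer arithmetic on the status vector and functions of (X, S) are extended by 0 when the status vector leaves S^{n_a}. Then for all M, N ∈ M_{n_a}: ⟨Φ_M, G₂ Φ_N⟩ = γ_{ij}^{(k)} N_i^{(k)} ⟨Φ_N, Φ_N⟩ if M = N + E_j^{(k)} − E_i^{(k)} for some statuses i ≠ j and subset index k, and ⟨Φ_M, G₂ Φ_N⟩ = 0 otherwise. -/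
open MeasureTheory Finset Function

namespace ABMFormal

section Aux











variable {d m n_s n_a : ℕ} {A : Fin m → Set (E d)}

open Classical in
lemma occ_eq_card
    (X : Fin n_a → E d) (S : Fin n_a → Fin n_s) (a : Fin n_s) (b : Fin m) :
    occ A X S a b = (Finset.univ.filter fun β => X β ∈ A b ∧ S β = a).card := by
  classical
  simp [occ, Set.ncard_eq_toFinset_card', Set.toFinset_setOf]

lemma card_filter_split {n : ℕ} (Q : Fin n → Prop) [DecidablePred Q] (α : Fin n) :
    (Finset.univ.filter Q).card
      = (if Q α then 1 else 0) + ((Finset.univ.erase α).filter Q).card := by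
  classical
  have h : (Finset.univ : Finset (Fin n)) = insert α (Finset.univ.erase α) := by
    simp
  conv_lhs => rw [h]
  rw [Finset.filter_insert]
  split_ifs with hq
  · rw [Finset.card_insert_of_notMem (by simp)]
    omega
  · simp

-- occ after a status update
lemma occ_update (hAdisj : Pairwise (Disjoint on A))
    (X : Fin n_a → E d) (S : Fin n_a → Fin n_s) (α : Fin n_a) (i' : Fin n_s)
    (k' : Fin m) (hx : X α ∈ A k') (a : Fin n_s) (b : Fin m) :
    ((occ A X (Function.update S α i') a b : ℕ) : ℤ)
      = (occ A X S a b : ℤ) - Emat (S α) k' a b + Emat i' k' a b := by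
  classical
  rw [occ_eq_card, occ_eq_card]
  rw [card_filter_split _ α, card_filter_split _ α]
  have hErase : ((Finset.univ.erase α).filter fun β => X β ∈ A b ∧ Function.update S α i' β = a)
      = (Finset.univ.erase α).filter fun β => X β ∈ A b ∧ S β = a := by
    apply Finset.filter_congr
    intro β hβ
    have hβα : β ≠ α := Finset.ne_of_mem_erase hβ
    simp [Function.update_of_ne hβα]
  rw [hErase]
  have hmem : ∀ c : Fin m, X α ∈ A c ↔ c = k' := by
    intro c
    constructor
    · intro hc
      by_contra hne
      exact (hAdisj hne).le_bot ⟨hc, hx⟩ 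
    · rintro rfl; exact hx
  have h1 : (if X α ∈ A b ∧ Function.update S α i' α = a then 1 else 0)
      = Emat i' k' a b := by
    simp only [Function.update_self, Emat]
    by_cases hb : b = k' <;> by_cases ha : i' = a <;>
      simp [hb, ha, hmem b, hx, @eq_comm _ a] <;> split_ifs <;> simp_all
  have h2 : (if X α ∈ A b ∧ S α = a then 1 else 0) = Emat (S α) k' a b := by
    simp only [Emat]
    by_cases hb : b = k' <;> by_cases ha : S α = a <;>
      simp [hb, ha, hmem b, hx, @eq_comm _ a] <;> split_ifs <;> simp_all
  push_cast
  omega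

lemma Phi_update (hAdisj : Pairwise (Disjoint on A))
    (N : Fin n_s → Fin m → ℤ) (X : Fin n_a → E d) (S : Fin n_a → Fin n_s)
    (α : Fin n_a) (i' : Fin n_s) (k' : Fin m) (hx : X α ∈ A k') :
    Phi A N X (Function.update S α i')
      = Phi A (N + Emat (S α) k' - Emat i' k') X S := by
  unfold Phi
  congr 1
  simp only [eq_iff_iff]
  constructor <;> intro h a b <;>
    have h1 := occ_update (A := A) hAdisj X S α i' k' hx a b <;>
    have h2 := h a b <;>
    simp only [Pi.add_apply, Pi.sub_apply] at * <;> omega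

lemma Phi_mul_Phi (M N : Fin n_s → Fin m → ℤ) (X : Fin n_a → E d) (S : Fin n_a → Fin n_s) :
    Phi A M X S * Phi A N X S = if M = N then Phi A M X S else 0 := by
  unfold Phi
  by_cases hM : ∀ i k, ((occ A X S i k : ℕ) : ℤ) = M i k <;>
    by_cases hN : ∀ i k, ((occ A X S i k : ℕ) : ℤ) = N i k
  · have hMN : M = N := by
      funext a b; rw [← hM a b, ← hN a b]
    rw [if_pos hM, if_pos hN, if_pos hMN]; ring
  · have hMN : M ≠ N := fun h => hN (h ▸ hM)
    rw [if_neg hMN, if_pos hM, if_neg hN]; ring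
  · by_cases h : M = N
    · exact absurd (h ▸ hN) hM
    · rw [if_neg hM, if_neg h]; ring
  · by_cases h : M = N <;> [skip; skip] <;> rw [if_neg hM, if_neg hN] <;>
      split_ifs <;> ring

lemma Emat_cancel {i j i' j' : Fin n_s} {k k' : Fin m} (hij : i ≠ j) (hij' : i' ≠ j')
    (N : Fin n_s → Fin m → ℤ)
    (h : N + Emat j k - Emat i k = N + Emat j' k' - Emat i' k') :
    i' = i ∧ j' = j ∧ k' = k := by
  have hp : ∀ a b, Emat j k a b + Emat i' k' a b = Emat i k a b + Emat j' k' a b := by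
    intro a b
    have := congrFun (congrFun h a) b
    simp only [Pi.add_apply, Pi.sub_apply] at this
    omega
  have hik := hp i k
  have hjk := hp j k
  have hik' := hp i' k'
  have hjk' := hp j' k'
  simp only [Emat] at hik hjk hik' hjk'
  have hii' : i' = i ∧ k' = k := by
    split_ifs at hik with h1 h2 h3 h4 <;> simp_all <;> omega
  obtain ⟨rfl, rfl⟩ := hii'
  refine ⟨rfl, ?_, rfl⟩
  split_ifs at hjk' with h1 h2 h3 h4 <;> simp_all <;> omega

-- continuation: insert lemmas

variable {d m n_s : ℕ} {A : Fin m → Set (E d)}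

open scoped Classical

lemma occ_insert {n : ℕ} (X' : Fin n → E d) (S : Fin (n + 1) → Fin n_s)
    (α : Fin (n + 1)) (x : E d) (a : Fin n_s) (b : Fin m) :
    occ A (Fin.insertNth α x X') S a b
      = (if x ∈ A b ∧ S α = a then 1 else 0)
        + occ A X' (S ∘ α.succAbove) a b := by
  classical
  rw [occ_eq_card, occ_eq_card, card_filter_split _ α]
  congr 1
  · simp [Fin.insertNth_apply_same]
  · refine (Finset.card_bij (fun (γ : Fin n) _ => α.succAbove γ) ?_ ?_ ?_).symm
    · intro γ hγ
      simp only [Finset.mem_filter, Finset.mem_univ, true_and, Function.comp_apply] at hγ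
      simp only [Finset.mem_filter, Finset.mem_erase, Finset.mem_univ, true_and, and_true]
      refine ⟨Fin.succAbove_ne α γ, ?_, hγ.2⟩
      rw [Fin.insertNth_apply_succAbove]
      exact hγ.1
    · intro γ₁ _ γ₂ _ heq
      exact Fin.succAbove_right_injective heq
    · intro β hβ
      simp only [Finset.mem_filter, Finset.mem_erase, Finset.mem_univ, true_and, and_true] at hβ
      obtain ⟨γ, rfl⟩ := Fin.exists_succAbove_eq hβ.1
      refine ⟨γ, ?_, rfl⟩
      simp only [Finset.mem_filter, Finset.mem_univ, true_and, Function.comp_apply]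
      have h5 := hβ.2.1
      rw [Fin.insertNth_apply_succAbove] at h5
      exact ⟨h5, hβ.2.2⟩

lemma Phi_insert (hAdisj : Pairwise (Disjoint on A)) {n : ℕ}
    (P : Fin n_s → Fin m → ℤ) (X' : Fin n → E d) (S : Fin (n + 1) → Fin n_s)
    (α : Fin (n + 1)) (x : E d) (k' : Fin m) (hx : x ∈ A k') :
    Phi A P (Fin.insertNth α x X') S
      = Phi A (P - Emat (S α) k') X' (S ∘ α.succAbove) := by
  unfold Phi
  congr 1
  simp only [eq_iff_iff]
  have hmem : ∀ c : Fin m, x ∈ A c ↔ c = k' := by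
    intro c
    constructor
    · intro hc
      by_contra hne
      exact (hAdisj hne).le_bot ⟨hc, hx⟩
    · rintro rfl; exact hx
  have key : ∀ a b, (if x ∈ A b ∧ S α = a then (1 : ℤ) else 0) = Emat (S α) k' a b := by
    intro a b
    simp only [Emat]
    by_cases hb : b = k' <;> by_cases ha : S α = a <;>
      simp [hb, ha, hmem b, hx, @eq_comm _ a] <;> split_ifs <;> simp_all
  constructor
  · intro h a b
    have h2 := h a b
    have h1 : ((occ A (Fin.insertNth α x X') S a b : ℕ) : ℤ)
        = Emat (S α) k' a b + (occ A X' (S ∘ α.succAbove) a b : ℤ) := by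
      rw [← key a b]
      exact_mod_cast occ_insert (A := A) X' S α x a b
    simp only [Pi.sub_apply]
    omega
  · intro h a b
    have h2 := h a b
    simp only [Pi.sub_apply] at h2
    have h1 : ((occ A (Fin.insertNth α x X') S a b : ℕ) : ℤ)
        = Emat (S α) k' a b + (occ A X' (S ∘ α.succAbove) a b : ℤ) := by
      rw [← key a b]
      exact_mod_cast occ_insert (A := A) X' S α x a b
    omega

lemma measurable_Phi {n_a : ℕ} (hAmeas : ∀ k, MeasurableSet (A k))
    (P : Fin n_s → Fin m → ℤ) (S : Fin n_a → Fin n_s) :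
    Measurable fun X : Fin n_a → E d => Phi A P X S := by
  classical
  have hocc : ∀ (a : Fin n_s) (b : Fin m),
      Measurable fun X : Fin n_a → E d => occ A X S a b := by
    intro a b
    have : (fun X : Fin n_a → E d => occ A X S a b)
        = fun X => ∑ β : Fin n_a, if X β ∈ A b ∧ S β = a then 1 else 0 := by
      funext X
      rw [occ_eq_card, Finset.card_filter]
    rw [this]
    apply Finset.measurable_sum
    intro β _
    by_cases hS : S β = a
    · simp only [hS, and_true]
      exact Measurable.ite ((measurable_pi_apply β) (hAmeas b)) measurable_const
        measurable_const
    · simp [hS]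
  have hset : MeasurableSet {X : Fin n_a → E d | ∀ a b, ((occ A X S a b : ℕ) : ℤ) = P a b} := by
    have : {X : Fin n_a → E d | ∀ a b, ((occ A X S a b : ℕ) : ℤ) = P a b}
        = ⋂ a, ⋂ b, (fun X => occ A X S a b) ⁻¹' {c : ℕ | ((c : ℕ) : ℤ) = P a b} := by
      ext X; simp [Set.mem_iInter]
    rw [this]
    exact MeasurableSet.iInter fun a => MeasurableSet.iInter fun b =>
      (hocc a b) .of_discrete
  have : (fun X : Fin n_a → E d => Phi A P X S)
      = Set.indicator {X : Fin n_a → E d | ∀ a b, ((occ A X S a b : ℕ) : ℤ) = P a b}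
          (fun _ => (1 : ℝ)) := by
    funext X
    by_cases h : ∀ a b, ((occ A X S a b : ℕ) : ℤ) = P a b
    · simp [Phi, h]
    · simp [Phi, h]
  rw [this]
  exact Measurable.indicator measurable_const hset

-- stage 3: measure-theoretic lemmas

open scoped Classical

variable {d m n_s : ℕ} {A : Fin m → Set (E d)} {Xdom : Set (E d)}



lemma restrict_posSet (n : ℕ) (hX : MeasurableSet Xdom) :
    (volume : Measure (Fin n → E d)).restrict (posSet Xdom n)
      = Measure.pi (fun _ : Fin n => volume.restrict Xdom) := by
  refine (Measure.pi_eq (μ := fun _ : Fin n => volume.restrict Xdom) fun s hs => ?_).symm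
  rw [Measure.restrict_apply (MeasurableSet.univ_pi hs)]
  have : (Set.univ.pi s) ∩ posSet Xdom n = Set.univ.pi fun i => s i ∩ Xdom := by
    rw [posSet, ← Set.pi_inter_distrib]
  rw [this, volume_pi_pi]
  exact Finset.prod_congr rfl fun i _ => (Measure.restrict_apply (hs i)).symm

lemma Phi_abs_le_one {n_a : ℕ} (P : Fin n_s → Fin m → ℤ) (X : Fin n_a → E d)
    (S : Fin n_a → Fin n_s) : ‖Phi A P X S‖ ≤ 1 := by
  unfold Phi
  split_ifs <;> simp

lemma integrable_Phi {n : ℕ} (hX : MeasurableSet Xdom) (hXfin : volume Xdom ≠ ⊤)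
    (hAmeas : ∀ k, MeasurableSet (A k)) (P : Fin n_s → Fin m → ℤ)
    (S : Fin n → Fin n_s) :
    Integrable (fun X' : Fin n → E d => Phi A P X' S)
      (Measure.pi fun _ : Fin n => volume.restrict Xdom) := by
  haveI : IsFiniteMeasure ((volume : Measure (E d)).restrict Xdom) :=
    ⟨by rwa [Measure.restrict_apply_univ, lt_top_iff_ne_top]⟩
  have hmeas := measurable_Phi (A := A) hAmeas P S
  refine Integrable.mono' (integrable_const 1) hmeas.aestronglyMeasurable ?_
  exact Filter.Eventually.of_forall fun X => Phi_abs_le_one P X S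

lemma sum_insert_status {n : ℕ} (α : Fin (n + 1)) (j : Fin n_s)
    (F : (Fin n → Fin n_s) → ℝ) :
    (∑ S : Fin (n + 1) → Fin n_s, if S α = j then F (S ∘ α.succAbove) else 0)
      = ∑ S' : Fin n → Fin n_s, F S' := by
  classical
  rw [← Equiv.sum_comp ((Fin.insertNthEquiv (fun _ => Fin n_s) α))
    (fun S : Fin (n + 1) → Fin n_s => if S α = j then F (S ∘ α.succAbove) else 0)]
  rw [Fintype.sum_prod_type]
  have hterm : ∀ (s : Fin n_s) (S' : Fin n → Fin n_s),
      (if ((Fin.insertNthEquiv (fun _ => Fin n_s) α) (s, S')) α = j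
        then F (((Fin.insertNthEquiv (fun _ => Fin n_s) α) (s, S')) ∘ α.succAbove)
        else 0)
      = if s = j then F S' else 0 := by
    intro s S'
    have h1 : ((Fin.insertNthEquiv (fun _ => Fin n_s) α) (s, S')) α = s := by
      simp [Fin.insertNthEquiv, Fin.insertNth_apply_same]
    have h2 : ((Fin.insertNthEquiv (fun _ => Fin n_s) α) (s, S')) ∘ α.succAbove = S' := by
      funext β
      simp [Fin.insertNthEquiv, Fin.insertNth_apply_succAbove]
    rw [h1, h2]
  simp_rw [hterm]
  simp

/-- The key single-coordinate factorization. -/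
lemma integral_factor {n : ℕ} (hX : MeasurableSet Xdom) (hXfin : volume Xdom ≠ ⊤)
    (hAmeas : ∀ k, MeasurableSet (A k)) (hAdisj : Pairwise (Disjoint on A))
    (k : Fin m) (hsub : A k ⊆ Xdom) (g : E d → ℝ) (hg : IntegrableOn g Xdom)
    (P : Fin n_s → Fin m → ℤ) (S : Fin (n + 1) → Fin n_s) (α : Fin (n + 1)) :
    (∫ X, (A k).indicator g (X α) * Phi A P X S
        ∂(Measure.pi fun _ : Fin (n + 1) => volume.restrict Xdom))
      = (∫ x in A k, g x) *
        ∫ X', Phi A (P - Emat (S α) k) X' (S ∘ α.succAbove)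
          ∂(Measure.pi fun _ : Fin n => volume.restrict Xdom) ∧
    Integrable (fun X : Fin (n + 1) → E d => (A k).indicator g (X α) * Phi A P X S)
      (Measure.pi fun _ : Fin (n + 1) => volume.restrict Xdom) := by
  haveI : IsFiniteMeasure ((volume : Measure (E d)).restrict Xdom) :=
    ⟨by rwa [Measure.restrict_apply_univ, lt_top_iff_ne_top]⟩
  set ν : Measure (E d) := volume.restrict Xdom with hν
  set e := MeasurableEquiv.piFinSuccAbove (fun _ : Fin (n + 1) => E d) α with he
  have hmp : MeasurePreserving e (Measure.pi fun _ : Fin (n + 1) => ν)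
      (ν.prod (Measure.pi fun _ : Fin n => ν)) :=
    measurePreserving_piFinSuccAbove (fun _ => ν) α
  set F : (Fin (n + 1) → E d) → ℝ := fun X => (A k).indicator g (X α) * Phi A P X S with hF
  set G : E d × (Fin n → E d) → ℝ :=
    fun z => (A k).indicator g z.1 * Phi A (P - Emat (S α) k) z.2 (S ∘ α.succAbove) with hG
  have hsymm : ∀ z : E d × (Fin n → E d), F (e.symm z) = G z := by
    rintro ⟨x, X'⟩
    have hes : e.symm (x, X') = Fin.insertNth α x X' := by
      rw [he, MeasurableEquiv.piFinSuccAbove_symm_apply]; rfl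
    rw [hes]
    simp only [hF, hG, Fin.insertNth_apply_same]
    by_cases hx : x ∈ A k
    · rw [Phi_insert hAdisj P X' S α x k hx]
    · rw [Set.indicator_of_notMem hx, zero_mul, zero_mul]
  have hFG : F = G ∘ e := by
    funext X
    have : X = e.symm (e X) := (e.symm_apply_apply X).symm
    rw [Function.comp_apply, ← hsymm (e X), ← this]
  have hgind : Integrable ((A k).indicator g) ν := hg.indicator (hAmeas k)
  have hPhiint := integrable_Phi (A := A) (Xdom := Xdom) hX hXfin hAmeas
    (P - Emat (S α) k) (S ∘ α.succAbove)
  have hGint : Integrable G (ν.prod (Measure.pi fun _ : Fin n => ν)) :=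
    Integrable.mul_prod hgind hPhiint
  constructor
  · rw [hFG]
    rw [show (∫ X, (G ∘ e) X ∂(Measure.pi fun _ : Fin (n + 1) => ν))
        = ∫ z, G z ∂(ν.prod (Measure.pi fun _ : Fin n => ν)) from
      hmp.integral_comp e.measurableEmbedding G]
    rw [hG]
    rw [integral_prod_mul (μ := ν) (ν := Measure.pi fun _ : Fin n => ν)
      ((A k).indicator g) (fun X' => Phi A (P - Emat (S α) k) X' (S ∘ α.succAbove))]
    congr 1
    rw [integral_indicator (hAmeas k), hν, Measure.restrict_restrict (hAmeas k),
      Set.inter_eq_self_of_subset_left hsub]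
  · rw [hFG]
    exact (hmp.integrable_comp_emb e.measurableEmbedding).mpr hGint

-- stage 4: pointwise lemmas (needs G2First etc from pinned file)
open scoped Classical

variable {d m n_s : ℕ} {A : Fin m → Set (E d)}

lemma cell_unique (hAdisj : Pairwise (Disjoint on A)) {x : E d} {k k' : Fin m}
    (h : x ∈ A k) (h' : x ∈ A k') : k = k' := by
  by_contra hne
  exact (hAdisj hne).le_bot ⟨h, h'⟩

lemma pointwise_matched {n_a : ℕ} (hAdisj : Pairwise (Disjoint on A))
    (γ : Fin n_s → Fin n_s → E d → ℝ) (hγdiag : ∀ i x, γ i i x = 0)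
    {M N : Fin n_s → Fin m → ℤ} {i j : Fin n_s} {k : Fin m}
    (hij : i ≠ j) (hmatch : M = N + Emat j k - Emat i k)
    (X : Fin n_a → E d) (S : Fin n_a → Fin n_s) (hXmem : ∀ β, ∃ k', X β ∈ A k') :
    Phi A M X S * G2First γ (Phi A N) X S
      = ∑ α, if S α = j then (A k).indicator (γ i j) (X α) * Phi A M X S else 0 := by
  unfold G2First
  calc Phi A M X S * ∑ i', ∑ j', ∑ α, deltaS j' (S α) * γ i' j' (X α) *
          Phi A N X (Function.update S α i')
      = ∑ i', ∑ j', ∑ α, Phi A M X S * (deltaS j' (S α) * γ i' j' (X α) *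
          Phi A N X (Function.update S α i')) := by
        rw [Finset.mul_sum]
        exact Finset.sum_congr rfl fun i' _ => by
          rw [Finset.mul_sum]
          exact Finset.sum_congr rfl fun j' _ => Finset.mul_sum _ _ _
    _ = ∑ i', ∑ α, ∑ j', Phi A M X S * (deltaS j' (S α) * γ i' j' (X α) *
          Phi A N X (Function.update S α i')) :=
        Finset.sum_congr rfl fun i' _ => Finset.sum_comm
    _ = ∑ α, ∑ i', ∑ j', Phi A M X S * (deltaS j' (S α) * γ i' j' (X α) *
          Phi A N X (Function.update S α i')) := Finset.sum_comm
    _ = ∑ α, if S α = j then (A k).indicator (γ i j) (X α) * Phi A M X S else 0 := by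
        refine Finset.sum_congr rfl fun α _ => ?_
        obtain ⟨k', hk'⟩ := hXmem α
        have hterm : ∀ i' j', Phi A M X S * (deltaS j' (S α) * γ i' j' (X α) *
            Phi A N X (Function.update S α i'))
            = if i' = i ∧ j' = j ∧ S α = j ∧ X α ∈ A k
              then γ i j (X α) * Phi A M X S else 0 := by
          intro i' j'
          by_cases hs : S α = j'
          · have hupd := Phi_update hAdisj N X S α i' k' hk'
            rw [hupd]
            have hδ : deltaS j' (S α) = 1 := by simp [deltaS, hs]
            rw [hδ, one_mul]
            by_cases hii : i' = j'
            · subst hii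
              rw [hγdiag]
              have hcond : ¬(i' = i ∧ i' = j ∧ S α = j ∧ X α ∈ A k) := by
                rintro ⟨rfl, h2, -, -⟩; exact hij h2
              rw [if_neg hcond]; ring
            · have hrw : Phi A M X S * (γ i' j' (X α) *
                  Phi A (N + Emat (S α) k' - Emat i' k') X S)
                  = γ i' j' (X α) * (Phi A M X S *
                    Phi A (N + Emat (S α) k' - Emat i' k') X S) := by ring
              rw [hrw, Phi_mul_Phi]
              by_cases hMN : M = N + Emat (S α) k' - Emat i' k'
              · rw [if_pos hMN]
                have hcan := Emat_cancel hij (hii : i' ≠ j') N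
                  (hmatch.symm.trans (hs ▸ hMN))
                have hcond : i' = i ∧ j' = j ∧ S α = j ∧ X α ∈ A k :=
                  ⟨hcan.1, hcan.2.1, hs.trans hcan.2.1, hcan.2.2 ▸ hk'⟩
                rw [if_pos hcond, hcan.1, hcan.2.1]
              · rw [if_neg hMN]
                have hcond : ¬(i' = i ∧ j' = j ∧ S α = j ∧ X α ∈ A k) := by
                  rintro ⟨rfl, rfl, hsj, hxk⟩
                  have hkk : k = k' := cell_unique hAdisj hxk hk'
                  apply hMN
                  rw [hs, ← hkk]
                  exact hmatch
                rw [if_neg hcond]; ring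
          · have hδ : deltaS j' (S α) = 0 := by simp [deltaS, hs]
            have hcond : ¬(i' = i ∧ j' = j ∧ S α = j ∧ X α ∈ A k) := by
              rintro ⟨-, rfl, hsj, -⟩; exact hs hsj
            rw [hδ, if_neg hcond]; ring
        simp_rw [hterm]
        rw [Finset.sum_eq_single i]
        · rw [Finset.sum_eq_single j]
          · by_cases hs : S α = j <;> by_cases hx : X α ∈ A k <;>
              simp [hs, hx, Set.indicator_of_mem, Set.indicator_of_notMem]
          · intro j' _ hne
            rw [if_neg (by rintro ⟨-, rfl, -, -⟩; exact hne rfl)]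
          · intro h; exact absurd (Finset.mem_univ j) h
        · intro i' _ hne
          refine Finset.sum_eq_zero fun j' _ => ?_
          rw [if_neg (by rintro ⟨rfl, -, -, -⟩; exact hne rfl)]
        · intro h; exact absurd (Finset.mem_univ i) h

lemma pointwise_unmatched {n_a : ℕ} (hAdisj : Pairwise (Disjoint on A))
    (γ : Fin n_s → Fin n_s → E d → ℝ) (hγdiag : ∀ i x, γ i i x = 0)
    {M N : Fin n_s → Fin m → ℤ}
    (hnone : ¬∃ (i j : Fin n_s) (k : Fin m), i ≠ j ∧ M = N + Emat j k - Emat i k)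
    (X : Fin n_a → E d) (S : Fin n_a → Fin n_s) (hXmem : ∀ β, ∃ k', X β ∈ A k') :
    Phi A M X S * G2First γ (Phi A N) X S = 0 := by
  unfold G2First
  rw [Finset.mul_sum]
  refine Finset.sum_eq_zero fun i' _ => ?_
  rw [Finset.mul_sum]
  refine Finset.sum_eq_zero fun j' _ => ?_
  rw [Finset.mul_sum]
  refine Finset.sum_eq_zero fun α _ => ?_
  obtain ⟨k', hk'⟩ := hXmem α
  by_cases hs : S α = j'
  · rw [Phi_update hAdisj N X S α i' k' hk']
    by_cases hii : i' = j'
    · subst hii; rw [hs, hγdiag]; ring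
    · have hrw : Phi A M X S * (deltaS j' (S α) * γ i' j' (X α) *
          Phi A (N + Emat (S α) k' - Emat i' k') X S)
          = deltaS j' (S α) * γ i' j' (X α) * (Phi A M X S *
            Phi A (N + Emat (S α) k' - Emat i' k') X S) := by ring
      rw [hrw, Phi_mul_Phi]
      have hMN : ¬ M = N + Emat (S α) k' - Emat i' k' := by
        intro h
        exact hnone ⟨i', j', k', fun hh => hii hh, hs ▸ h⟩
      rw [if_neg hMN]; ring
  · have hδ : deltaS j' (S α) = 0 := by simp [deltaS, hs]
    rw [hδ]; ring

lemma count_mul_Phi {n_a : ℕ} (N : Fin n_s → Fin m → ℤ) (i : Fin n_s) (k : Fin m)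
    (X : Fin n_a → E d) (S : Fin n_a → Fin n_s) :
    ((N i k : ℤ) : ℝ) * Phi A N X S
      = ∑ α, if S α = i then (A k).indicator (fun _ => (1 : ℝ)) (X α) * Phi A N X S
          else 0 := by
  classical
  by_cases hc : ∀ a b, ((occ A X S a b : ℕ) : ℤ) = N a b
  · have hPhi : Phi A N X S = 1 := if_pos hc
    rw [hPhi, mul_one, ← hc i k]
    rw [occ_eq_card]
    rw [Finset.card_filter]
    push_cast
    refine Finset.sum_congr rfl fun α _ => ?_
    by_cases hs : S α = i <;> by_cases hx : X α ∈ A k <;>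
      simp [hs, hx, Set.indicator_of_mem, Set.indicator_of_notMem]
  · have hPhi : Phi A N X S = 0 := if_neg hc
    rw [hPhi, mul_zero]
    refine (Finset.sum_eq_zero fun α _ => ?_).symm
    rw [mul_zero]
    simp


end Aux

/-- for the inflow part `G₂` of the first-order adoption generator,
`⟨Φ_M, G₂ Φ_N⟩ = γ_{ij}^{(k)} N_i^{(k)} ⟨Φ_N, Φ_N⟩` if `M = N + E_j^{(k)} − E_i^{(k)}`
for some statuses `i ≠ j` and subset index `k`, and `⟨Φ_M, G₂ Φ_N⟩ = 0` otherwise. -/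
theorem statement11 (d m n_s n_a : ℕ) (hns : 1 ≤ n_s) (hna : 1 ≤ n_a)
    (Xdom : Set (E d)) (hXcomp : IsCompact Xdom) (hXpos : 0 < volume Xdom)
    (A : Fin m → Set (E d)) (hAmeas : ∀ k, MeasurableSet (A k))
    (hAdisj : Pairwise (Disjoint on A)) (hApos : ∀ k, 0 < volume (A k))
    (hAcover : (⋃ k, A k) = Xdom)
    (γ : Fin n_s → Fin n_s → E d → ℝ)
    (hγnonneg : ∀ i j x, 0 ≤ γ i j x) (hγdiag : ∀ i x, γ i i x = 0)
    (hγint : ∀ i j, IntegrableOn (γ i j) Xdom)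
    (M N : Fin n_s → Fin m → ℤ)
    (hM : M ∈ Mset n_s m n_a) (hN : N ∈ Mset n_s m n_a) :
    (∀ (i j : Fin n_s) (k : Fin m), i ≠ j → M = N + Emat j k - Emat i k →
      ip Xdom (Phi (n_a := n_a) A M) (G2First γ (Phi A N))
        = gammaK A γ i j k * (N i k : ℝ) * ip Xdom (Phi (n_a := n_a) A N) (Phi A N)) ∧
    ((¬∃ (i j : Fin n_s) (k : Fin m), i ≠ j ∧ M = N + Emat j k - Emat i k) →
      ip Xdom (Phi (n_a := n_a) A M) (G2First γ (Phi A N)) = 0) := by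
  obtain ⟨n, rfl⟩ := Nat.exists_eq_succ_of_ne_zero (Nat.one_le_iff_ne_zero.mp hna)
  have hXmeas : MeasurableSet Xdom := hXcomp.isClosed.measurableSet
  have hXfin : volume Xdom ≠ ⊤ := hXcomp.measure_lt_top.ne
  haveI : IsFiniteMeasure ((volume : Measure (E d)).restrict Xdom) :=
    ⟨by rwa [Measure.restrict_apply_univ, lt_top_iff_ne_top]⟩
  have hsub : ∀ k, A k ⊆ Xdom := fun k => hAcover ▸ Set.subset_iUnion A k
  have hposmeas : MeasurableSet (posSet Xdom (n + 1)) :=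
    MeasurableSet.univ_pi fun _ => hXmeas
  have hmem : ∀ X : Fin (n + 1) → E d, X ∈ posSet Xdom (n + 1) →
      ∀ β, ∃ k', X β ∈ A k' := by
    intro X hX β
    have h1 : X β ∈ Xdom := hX β (Set.mem_univ β)
    rw [← hAcover] at h1
    exact Set.mem_iUnion.mp h1
  constructor
  · -- matched case
    intro i j k hij hmatch
    have hPM : M - Emat j k = N - Emat i k := by
      rw [hmatch]; abel
    have hVpos : (0 : ℝ) < (volume (A k)).toReal :=
      ENNReal.toReal_pos (hApos k).ne'
        (((measure_mono (hsub k)).trans_lt hXcomp.measure_lt_top).ne)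
    have hGV : gammaK A γ i j k * (volume (A k)).toReal = ∫ x in A k, γ i j x := by
      rw [gammaK, div_mul_cancel₀ _ hVpos.ne']
    -- left side per status vector
    have hL : ∀ S : Fin (n + 1) → Fin n_s,
        (∫ X in posSet Xdom (n + 1), Phi A M X S * G2First γ (Phi A N) X S)
          = ∑ α, if S α = j then (∫ x in A k, γ i j x) *
              ∫ X', Phi A (N - Emat i k) X' (S ∘ α.succAbove)
                ∂(Measure.pi fun _ : Fin n => volume.restrict Xdom) else 0 := by
      intro S
      rw [setIntegral_congr_fun hposmeas (g := fun X => ∑ α, if S α = j then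
          (A k).indicator (γ i j) (X α) * Phi A M X S else 0)
        (fun X hX => pointwise_matched hAdisj γ hγdiag hij hmatch X S (hmem X hX))]
      rw [restrict_posSet (n + 1) hXmeas]
      rw [integral_finset_sum Finset.univ (fun α _ => ?_)]
      swap
      · by_cases hs : S α = j
        · simp only [if_pos hs]
          exact (integral_factor hXmeas hXfin hAmeas hAdisj k (hsub k) (γ i j)
            (hγint i j) M S α).2
        · simp only [if_neg hs]
          exact integrable_zero _ _ _
      refine Finset.sum_congr rfl fun α _ => ?_
      by_cases hs : S α = j
      · simp only [if_pos hs]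
        have hf := (integral_factor hXmeas hXfin hAmeas hAdisj k (hsub k) (γ i j)
          (hγint i j) M S α).1
        rw [hs, hPM] at hf
        exact hf
      · simp only [if_neg hs]
        exact integral_zero _ _
    -- right side per status vector
    have hR : ∀ S : Fin (n + 1) → Fin n_s,
        ((N i k : ℤ) : ℝ) * ∫ X in posSet Xdom (n + 1), Phi A N X S * Phi A N X S
          = ∑ α, if S α = i then (volume (A k)).toReal *
              ∫ X', Phi A (N - Emat i k) X' (S ∘ α.succAbove)
                ∂(Measure.pi fun _ : Fin n => volume.restrict Xdom) else 0 := by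
      intro S
      have hsq : ∀ X : Fin (n + 1) → E d, Phi A N X S * Phi A N X S = Phi A N X S := by
        intro X; rw [Phi_mul_Phi]; simp
      simp only [hsq]
      rw [← integral_const_mul]
      simp only [count_mul_Phi N i k]
      rw [restrict_posSet (n + 1) hXmeas]
      have hone : IntegrableOn (fun _ : E d => (1 : ℝ)) Xdom :=
        integrableOn_const hXcomp.measure_lt_top.ne
      rw [integral_finset_sum Finset.univ (fun α _ => ?_)]
      swap
      · by_cases hs : S α = i
        · simp only [if_pos hs]
          exact (integral_factor hXmeas hXfin hAmeas hAdisj k (hsub k)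
            (fun _ => (1 : ℝ)) hone N S α).2
        · simp only [if_neg hs]
          exact integrable_zero _ _ _
      refine Finset.sum_congr rfl fun α _ => ?_
      by_cases hs : S α = i
      · simp only [if_pos hs]
        have hf := (integral_factor hXmeas hXfin hAmeas hAdisj k (hsub k)
          (fun _ => (1 : ℝ)) hone N S α).1
        rw [hs] at hf
        rw [hf, setIntegral_const, smul_eq_mul, mul_one, measureReal_def]
      · simp only [if_neg hs]
        exact integral_zero _ _
    -- assemble
    have main : (∑ S : Fin (n + 1) → Fin n_s,
          ∫ X in posSet Xdom (n + 1), Phi A M X S * G2First γ (Phi A N) X S)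
        = gammaK A γ i j k * ((N i k : ℤ) : ℝ) *
          ∑ S : Fin (n + 1) → Fin n_s,
            ∫ X in posSet Xdom (n + 1), Phi A N X S * Phi A N X S := by
      have h2 : ((N i k : ℤ) : ℝ) * ∑ S : Fin (n + 1) → Fin n_s,
            (∫ X in posSet Xdom (n + 1), Phi A N X S * Phi A N X S)
          = ∑ α : Fin (n + 1), ∑ S' : Fin n → Fin n_s, (volume (A k)).toReal *
              ∫ X', Phi A (N - Emat i k) X' S'
                ∂(Measure.pi fun _ : Fin n => volume.restrict Xdom) := by
        rw [Finset.mul_sum]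
        rw [Finset.sum_congr rfl fun S _ => hR S]
        rw [Finset.sum_comm]
        exact Finset.sum_congr rfl fun α _ => sum_insert_status α i
          (fun S' => (volume (A k)).toReal * ∫ X', Phi A (N - Emat i k) X' S'
            ∂(Measure.pi fun _ : Fin n => volume.restrict Xdom))
      have h1 : (∑ S : Fin (n + 1) → Fin n_s,
            ∫ X in posSet Xdom (n + 1), Phi A M X S * G2First γ (Phi A N) X S)
          = ∑ α : Fin (n + 1), ∑ S' : Fin n → Fin n_s, (∫ x in A k, γ i j x) *
              ∫ X', Phi A (N - Emat i k) X' S'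
                ∂(Measure.pi fun _ : Fin n => volume.restrict Xdom) := by
        rw [Finset.sum_congr rfl fun S _ => hL S]
        rw [Finset.sum_comm]
        exact Finset.sum_congr rfl fun α _ => sum_insert_status α j
          (fun S' => (∫ x in A k, γ i j x) * ∫ X', Phi A (N - Emat i k) X' S'
            ∂(Measure.pi fun _ : Fin n => volume.restrict Xdom))
      rw [h1, mul_assoc, h2, Finset.mul_sum]
      refine Finset.sum_congr rfl fun α _ => ?_
      rw [Finset.mul_sum]
      refine Finset.sum_congr rfl fun S' _ => ?_
      rw [← mul_assoc, hGV]
    simp only [ip]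
    rw [main]
    push_cast
    ring
  · -- unmatched case
    intro hnone
    simp only [ip]
    have hzero : ∀ S : Fin (n + 1) → Fin n_s,
        (∫ X in posSet Xdom (n + 1), Phi A M X S * G2First γ (Phi A N) X S) = 0 := by
      intro S
      rw [setIntegral_congr_fun hposmeas (g := fun _ => (0 : ℝ))
        (fun X hX => pointwise_unmatched hAdisj γ hγdiag hnone X S (hmem X hX))]
      exact integral_zero _ _
    rw [Finset.sum_congr rfl fun S _ => hzero S]
    simp


end ABMFormal
end
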